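/- arXiv:2009.04832 — 10 statements merged into one kernel-verified Lean document; each statement's English description precedes it below -/
import Mathlib

section
/- Under mandatory reporting and mutual independence of D, (M(0),M(1)), and the Y potential outcomes, the pure indirect effect PIE = E[Y(1,M(1))] − E[Y(1,M(0))] equals β_M · E[Y(1,1)], where β_M = E[M(1)−M(0)]. -/
open MeasureTheory ProbabilityTheory

/-- Under mandatory reporting and mutual independence,
PIE = E[Y(1,M(1))] − E[Y(1,M(0))] = β_M · E[Y(1,1)], where β_M = E[M(1)] − E[M(0)].
Y(d,M(d')) is written as the mixture (1−M(d'))·Y(d,0) + M(d')·Y(d,1). -/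
theorem stmt1 {Ω : Type*} [MeasurableSpace Ω] (μ : Measure Ω) [IsProbabilityMeasure μ]
    (D : Ω → ℝ) (M : Fin 2 → Ω → ℝ) (Y : Fin 2 → Fin 2 → Ω → ℝ)
    (hDm : Measurable D) (hMm : ∀ d, Measurable (M d)) (hYm : ∀ d m, Measurable (Y d m))
    (hDb : ∀ ω, D ω = 0 ∨ D ω = 1)
    (hMb : ∀ d ω, M d ω = 0 ∨ M d ω = 1)
    (hYb : ∀ d m ω, Y d m ω = 0 ∨ Y d m ω = 1)
    (hindep1 : IndepFun D (fun ω => (M 0 ω, M 1 ω)) μ)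
    (hindep2 : IndepFun (fun ω => (D ω, M 0 ω, M 1 ω))
      (fun ω => (Y 0 0 ω, Y 0 1 ω, Y 1 0 ω, Y 1 1 ω)) μ)
    (hmand : ∀ d : Fin 2, ∀ᵐ ω ∂μ, Y d 0 ω = 0) :
    (∫ ω, ((1 - M 1 ω) * Y 1 0 ω + M 1 ω * Y 1 1 ω) ∂μ)
      - (∫ ω, ((1 - M 0 ω) * Y 1 0 ω + M 0 ω * Y 1 1 ω) ∂μ)
      = ((∫ ω, M 1 ω ∂μ) - (∫ ω, M 0 ω ∂μ)) * (∫ ω, Y 1 1 ω ∂μ) := by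
  have hY0 : ∀ᵐ ω ∂μ, Y 1 0 ω = 0 := hmand 1
  -- integrability of bounded measurable 0/1 functions
  have hint : ∀ (f : Ω → ℝ), Measurable f → (∀ ω, f ω = 0 ∨ f ω = 1) → Integrable f μ := by
    intro f hf hb
    refine Integrable.mono' (integrable_const 1) hf.aestronglyMeasurable ?_
    filter_upwards with ω
    rcases hb ω with h | h <;> simp [h]
  have hMi : ∀ d, Integrable (M d) μ := fun d => hint _ (hMm d) (hMb d)
  have hYi : Integrable (Y 1 1) μ := hint _ (hYm 1 1) (hYb 1 1)
  -- simplify each mixture integral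
  have hsimp : ∀ d : Fin 2,
      (∫ ω, ((1 - M d ω) * Y 1 0 ω + M d ω * Y 1 1 ω) ∂μ) = ∫ ω, M d ω * Y 1 1 ω ∂μ := by
    intro d
    refine integral_congr_ae ?_
    filter_upwards [hY0] with ω h
    simp [h]
  -- independence of M d and Y 1 1
  have hψ : Measurable (fun q : ℝ × ℝ × ℝ × ℝ => q.2.2.2) :=
    measurable_snd.comp (measurable_snd.comp measurable_snd)
  have hindep0 : IndepFun (M 0) (Y 1 1) μ :=
    hindep2.comp (φ := fun p : ℝ × ℝ × ℝ => p.2.1)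
      (measurable_fst.comp measurable_snd) hψ
  have hindep1' : IndepFun (M 1) (Y 1 1) μ :=
    hindep2.comp (φ := fun p : ℝ × ℝ × ℝ => p.2.2)
      (measurable_snd.comp measurable_snd) hψ
  have hindep : ∀ d : Fin 2, IndepFun (M d) (Y 1 1) μ := by
    intro d; fin_cases d; exacts [hindep0, hindep1']
  have hmul : ∀ d : Fin 2,
      (∫ ω, M d ω * Y 1 1 ω ∂μ) = (∫ ω, M d ω ∂μ) * (∫ ω, Y 1 1 ω ∂μ) :=
    fun d => (hindep d).integral_fun_mul_eq_mul_integral (hMi d).aestronglyMeasurable hYi.aestronglyMeasurable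
  rw [hsimp 0, hsimp 1, hmul 0, hmul 1]
  ring
end

section
/- Under mandatory reporting and mutual independence of D, (M(0),M(1)), and the Y potential outcomes, the average treatment effect ATE = E[Y(1,M(1))] − E[Y(0,M(0))] equals β_M·E[Y(1,1)] + β_Y·E[M(0)]. Consequently, if β_M ≥ 0 and β_Y ≥ 0 then ATE ≥ 0, and if β_M ≤ 0 and β_Y ≤ 0 then ATE ≤ 0. -/
open MeasureTheory ProbabilityTheory

/-- Under mandatory reporting and mutual independence,
ATE = E[Y(1,M(1))] − E[Y(0,M(0))] = β_M·E[Y(1,1)] + β_Y·E[M(0)];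
consequently β_M ≥ 0, β_Y ≥ 0 imply ATE ≥ 0, and β_M ≤ 0, β_Y ≤ 0 imply ATE ≤ 0. -/
theorem stmt3 {Ω : Type*} [MeasurableSpace Ω] (μ : Measure Ω) [IsProbabilityMeasure μ]
    (D : Ω → ℝ) (M : Fin 2 → Ω → ℝ) (Y : Fin 2 → Fin 2 → Ω → ℝ)
    (hDm : Measurable D) (hMm : ∀ d, Measurable (M d)) (hYm : ∀ d m, Measurable (Y d m))
    (hDb : ∀ ω, D ω = 0 ∨ D ω = 1)
    (hMb : ∀ d ω, M d ω = 0 ∨ M d ω = 1)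
    (hYb : ∀ d m ω, Y d m ω = 0 ∨ Y d m ω = 1)
    (hindep1 : IndepFun D (fun ω => (M 0 ω, M 1 ω)) μ)
    (hindep2 : IndepFun (fun ω => (D ω, M 0 ω, M 1 ω))
      (fun ω => (Y 0 0 ω, Y 0 1 ω, Y 1 0 ω, Y 1 1 ω)) μ)
    (hmand : ∀ d : Fin 2, ∀ᵐ ω ∂μ, Y d 0 ω = 0) :
    ((∫ ω, ((1 - M 1 ω) * Y 1 0 ω + M 1 ω * Y 1 1 ω) ∂μ)
        - (∫ ω, ((1 - M 0 ω) * Y 0 0 ω + M 0 ω * Y 0 1 ω) ∂μ)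
      = ((∫ ω, M 1 ω ∂μ) - (∫ ω, M 0 ω ∂μ)) * (∫ ω, Y 1 1 ω ∂μ)
        + ((∫ ω, Y 1 1 ω ∂μ) - (∫ ω, Y 0 1 ω ∂μ)) * (∫ ω, M 0 ω ∂μ))
    ∧ (0 ≤ (∫ ω, M 1 ω ∂μ) - (∫ ω, M 0 ω ∂μ) →
        0 ≤ (∫ ω, Y 1 1 ω ∂μ) - (∫ ω, Y 0 1 ω ∂μ) →
        0 ≤ (∫ ω, ((1 - M 1 ω) * Y 1 0 ω + M 1 ω * Y 1 1 ω) ∂μ)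
              - (∫ ω, ((1 - M 0 ω) * Y 0 0 ω + M 0 ω * Y 0 1 ω) ∂μ))
    ∧ ((∫ ω, M 1 ω ∂μ) - (∫ ω, M 0 ω ∂μ) ≤ 0 →
        (∫ ω, Y 1 1 ω ∂μ) - (∫ ω, Y 0 1 ω ∂μ) ≤ 0 →
        (∫ ω, ((1 - M 1 ω) * Y 1 0 ω + M 1 ω * Y 1 1 ω) ∂μ)
              - (∫ ω, ((1 - M 0 ω) * Y 0 0 ω + M 0 ω * Y 0 1 ω) ∂μ) ≤ 0) := by
  -- integrability of bounded variables
  have hint : ∀ (f : Ω → ℝ), Measurable f → (∀ ω, f ω = 0 ∨ f ω = 1) → Integrable f μ := by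
    intro f hf hb
    refine ⟨hf.aestronglyMeasurable, HasFiniteIntegral.of_bounded (C := 1) ?_⟩
    filter_upwards with ω
    rcases hb ω with h | h <;> simp [h]
  -- independence of M d and Y d 1
  have hIndMY : ∀ d m d' : Fin 2, IndepFun (M d) (Y d' m) μ := by
    intro d m d'
    have hφ : ∀ d : Fin 2, Measurable fun p : ℝ × ℝ × ℝ => if d = 0 then p.2.1 else p.2.2 := by
      intro d; by_cases h : d = 0 <;> simp [h] <;> fun_prop
    have hψ : Measurable fun q : ℝ × ℝ × ℝ × ℝ =>
        if d' = 0 then (if m = 0 then q.1 else q.2.1)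
        else (if m = 0 then q.2.2.1 else q.2.2.2) := by
      by_cases h : d' = 0 <;> by_cases h' : m = 0 <;> simp [h, h'] <;> fun_prop
    have H := hindep2.comp (hφ d) hψ
    have hd : ((fun p : ℝ × ℝ × ℝ => if d = 0 then p.2.1 else p.2.2)
        ∘ fun ω => (D ω, M 0 ω, M 1 ω)) = M d := by
      funext ω; fin_cases d <;> simp [Function.comp]
    have hy : ((fun q : ℝ × ℝ × ℝ × ℝ =>
        if d' = 0 then (if m = 0 then q.1 else q.2.1)
        else (if m = 0 then q.2.2.1 else q.2.2.2))
        ∘ fun ω => (Y 0 0 ω, Y 0 1 ω, Y 1 0 ω, Y 1 1 ω)) = Y d' m := by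
      funext ω; fin_cases d' <;> fin_cases m <;> simp [Function.comp]
    rwa [hd, hy] at H
  -- key: ∫ (1 - M d)·Y d 0 + M d · Y d 1 = E[M d]·E[Y d 1]
  have key : ∀ d : Fin 2,
      (∫ ω, ((1 - M d ω) * Y d 0 ω + M d ω * Y d 1 ω) ∂μ)
        = (∫ ω, M d ω ∂μ) * (∫ ω, Y d 1 ω ∂μ) := by
    intro d
    have h0 : (∫ ω, ((1 - M d ω) * Y d 0 ω + M d ω * Y d 1 ω) ∂μ)
        = ∫ ω, M d ω * Y d 1 ω ∂μ := by
      refine integral_congr_ae ?_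
      filter_upwards [hmand d] with ω hω
      simp [hω]
    have hmul : ∫ ω, M d ω * Y d 1 ω ∂μ = (∫ ω, M d ω ∂μ) * (∫ ω, Y d 1 ω ∂μ) :=
      (hIndMY d 1 d).integral_fun_mul_eq_mul_integral (hint _ (hMm d) (hMb d)).aestronglyMeasurable (hint _ (hYm d 1) (hYb d 1)).aestronglyMeasurable
    rw [h0, hmul]
  -- Y 1 1 and Y 0 1 independence not needed further; combine
  have hmain : (∫ ω, ((1 - M 1 ω) * Y 1 0 ω + M 1 ω * Y 1 1 ω) ∂μ)
        - (∫ ω, ((1 - M 0 ω) * Y 0 0 ω + M 0 ω * Y 0 1 ω) ∂μ)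
      = ((∫ ω, M 1 ω ∂μ) - (∫ ω, M 0 ω ∂μ)) * (∫ ω, Y 1 1 ω ∂μ)
        + ((∫ ω, Y 1 1 ω ∂μ) - (∫ ω, Y 0 1 ω ∂μ)) * (∫ ω, M 0 ω ∂μ) := by
    rw [key 0, key 1]; ring
  have hMnn : (0:ℝ) ≤ ∫ ω, M 0 ω ∂μ := by
    refine integral_nonneg fun ω => ?_
    rcases hMb 0 ω with h | h <;> simp [h]
  have hYnn : (0:ℝ) ≤ ∫ ω, Y 1 1 ω ∂μ := by
    refine integral_nonneg fun ω => ?_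
    rcases hYb 1 1 ω with h | h <;> simp [h]
  refine ⟨hmain, ?_, ?_⟩
  · intro h1 h2
    rw [hmain]
    positivity
  · intro h1 h2
    rw [hmain]
    have := mul_nonpos_of_nonpos_of_nonneg h1 hYnn
    have := mul_nonpos_of_nonpos_of_nonneg h2 hMnn
    linarith
end

section
/- Under mandatory reporting and mutual independence of D, (M(0),M(1)), and the Y potential outcomes, the vector of principal-stratum effects (E[Y(1)−Y(0) | S=al], E[Y(1)−Y(0) | S=mi], E[Y(1)−Y(0) | S=ma], E[Y(1)−Y(0) | S=ne]) equals (β_Y, β_Y + E[Y(0,1)], −E[Y(0,1)], 0), where Y(d)=Y(d,M(d)), for all strata with positive probability. -/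
open MeasureTheory ProbabilityTheory

lemma stmt7_aux {Ω : Type*} [MeasurableSpace Ω] (μ : Measure Ω) [IsProbabilityMeasure μ]
    (S : Set Ω) (hS : MeasurableSet S) (Z : Ω → ℝ) (hZ : Integrable Z μ)
    (hind : IndepFun (S.indicator (fun _ => (1:ℝ))) Z μ) :
    ∫ ω in S, Z ω ∂μ = (μ S).toReal * ∫ ω, Z ω ∂μ := by
  have h1 : ∫ ω in S, Z ω ∂μ = ∫ ω, S.indicator (fun _ => (1:ℝ)) ω * Z ω ∂μ := by
    rw [← integral_indicator hS]
    congr 1; ext ω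
    by_cases h : ω ∈ S <;> simp [h]
  have h2 := hind.integral_fun_mul_eq_mul_integral ((integrable_const (1:ℝ)).indicator hS).aestronglyMeasurable
    hZ.aestronglyMeasurable
  rw [h1]
  calc ∫ ω, S.indicator (fun _ => (1:ℝ)) ω * Z ω ∂μ
      = (∫ ω, S.indicator (fun _ => (1:ℝ)) ω ∂μ) * ∫ ω, Z ω ∂μ := h2
    _ = (μ S).toReal * ∫ ω, Z ω ∂μ := by simp [integral_indicator hS, Measure.real]

/-- Under mandatory reporting and mutual independence, the
principal-stratum effects (E[Y(1)−Y(0) | S], for S = al, mi, ma, ne) equal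
(β_Y, β_Y + E[Y(0,1)], −E[Y(0,1)], 0), for all strata with positive probability,
where Y(d) = Y(d,M(d)) = (1−M(d))·Y(d,0) + M(d)·Y(d,1) and β_Y = E[Y(1,1)]−E[Y(0,1)]. -/
theorem stmt7 {Ω : Type*} [MeasurableSpace Ω] (μ : Measure Ω) [IsProbabilityMeasure μ]
    (D : Ω → ℝ) (M : Fin 2 → Ω → ℝ) (Y : Fin 2 → Fin 2 → Ω → ℝ)
    (hDm : Measurable D) (hMm : ∀ d, Measurable (M d)) (hYm : ∀ d m, Measurable (Y d m))
    (hDb : ∀ ω, D ω = 0 ∨ D ω = 1)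
    (hMb : ∀ d ω, M d ω = 0 ∨ M d ω = 1)
    (hYb : ∀ d m ω, Y d m ω = 0 ∨ Y d m ω = 1)
    (hindep1 : IndepFun D (fun ω => (M 0 ω, M 1 ω)) μ)
    (hindep2 : IndepFun (fun ω => (D ω, M 0 ω, M 1 ω))
      (fun ω => (Y 0 0 ω, Y 0 1 ω, Y 1 0 ω, Y 1 1 ω)) μ)
    (hmand : ∀ d : Fin 2, ∀ᵐ ω ∂μ, Y d 0 ω = 0) :
    (0 < (μ {ω | M 0 ω = 1 ∧ M 1 ω = 1}).toReal →
      (∫ ω in {ω | M 0 ω = 1 ∧ M 1 ω = 1},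
          (((1 - M 1 ω) * Y 1 0 ω + M 1 ω * Y 1 1 ω)
            - ((1 - M 0 ω) * Y 0 0 ω + M 0 ω * Y 0 1 ω)) ∂μ)
        / (μ {ω | M 0 ω = 1 ∧ M 1 ω = 1}).toReal
      = (∫ ω, Y 1 1 ω ∂μ) - (∫ ω, Y 0 1 ω ∂μ))
    ∧ (0 < (μ {ω | M 0 ω = 0 ∧ M 1 ω = 1}).toReal →
      (∫ ω in {ω | M 0 ω = 0 ∧ M 1 ω = 1},
          (((1 - M 1 ω) * Y 1 0 ω + M 1 ω * Y 1 1 ω)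
            - ((1 - M 0 ω) * Y 0 0 ω + M 0 ω * Y 0 1 ω)) ∂μ)
        / (μ {ω | M 0 ω = 0 ∧ M 1 ω = 1}).toReal
      = ((∫ ω, Y 1 1 ω ∂μ) - (∫ ω, Y 0 1 ω ∂μ)) + (∫ ω, Y 0 1 ω ∂μ))
    ∧ (0 < (μ {ω | M 0 ω = 1 ∧ M 1 ω = 0}).toReal →
      (∫ ω in {ω | M 0 ω = 1 ∧ M 1 ω = 0},
          (((1 - M 1 ω) * Y 1 0 ω + M 1 ω * Y 1 1 ω)
            - ((1 - M 0 ω) * Y 0 0 ω + M 0 ω * Y 0 1 ω)) ∂μ)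
        / (μ {ω | M 0 ω = 1 ∧ M 1 ω = 0}).toReal
      = -(∫ ω, Y 0 1 ω ∂μ))
    ∧ (0 < (μ {ω | M 0 ω = 0 ∧ M 1 ω = 0}).toReal →
      (∫ ω in {ω | M 0 ω = 0 ∧ M 1 ω = 0},
          (((1 - M 1 ω) * Y 1 0 ω + M 1 ω * Y 1 1 ω)
            - ((1 - M 0 ω) * Y 0 0 ω + M 0 ω * Y 0 1 ω)) ∂μ)
        / (μ {ω | M 0 ω = 0 ∧ M 1 ω = 0}).toReal
      = 0) := by
  -- integrability of the potential outcomes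
  have hint : ∀ d m, Integrable (Y d m) μ := fun d m =>
    (integrable_const (1:ℝ)).mono' (hYm d m).aestronglyMeasurable
      (Filter.Eventually.of_forall fun ω => by
        rcases hYb d m ω with h | h <;> simp [h])
  -- measurability of strata
  have hSmeas : ∀ a b : ℝ, MeasurableSet {ω | M 0 ω = a ∧ M 1 ω = b} := fun a b =>
    (hMm 0 (measurableSet_singleton a)).inter (hMm 1 (measurableSet_singleton b))
  -- independence of stratum indicators and Y-functionals
  have hindS : ∀ (a b : ℝ) (ψ : ℝ × ℝ × ℝ × ℝ → ℝ), Measurable ψ →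
      IndepFun ({ω | M 0 ω = a ∧ M 1 ω = b}.indicator (fun _ => (1:ℝ)))
        (fun ω => ψ (Y 0 0 ω, Y 0 1 ω, Y 1 0 ω, Y 1 1 ω)) μ := by
    intro a b ψ hψ
    have hsetM : MeasurableSet {q : ℝ × ℝ × ℝ | q.2.1 = a ∧ q.2.2 = b} :=
      ((measurable_fst.comp measurable_snd) (measurableSet_singleton a)).inter
        ((measurable_snd.comp measurable_snd) (measurableSet_singleton b))
    have hφ : Measurable ({q : ℝ × ℝ × ℝ | q.2.1 = a ∧ q.2.2 = b}.indicator
        (fun _ => (1:ℝ))) := measurable_const.indicator hsetM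
    have h := hindep2.comp hφ hψ
    have heq : ({ω | M 0 ω = a ∧ M 1 ω = b}.indicator (fun _ => (1:ℝ)))
        = ({q : ℝ × ℝ × ℝ | q.2.1 = a ∧ q.2.2 = b}.indicator (fun _ => (1:ℝ))) ∘
          (fun ω => (D ω, M 0 ω, M 1 ω)) := by
      ext ω
      by_cases h' : M 0 ω = a ∧ M 1 ω = b <;>
        simp [Set.indicator_apply, h', Set.mem_setOf_eq]
    rw [heq]
    exact h
  refine ⟨?_, ?_, ?_, ?_⟩
  · -- always reporters: effect = β_Y
    intro hpos
    have hS := hSmeas 1 1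
    rw [setIntegral_congr_fun hS (g := fun ω => Y 1 1 ω - Y 0 1 ω)
        (fun ω hω => by obtain ⟨h0, h1⟩ := hω; rw [h0, h1]; ring),
      stmt7_aux μ _ hS (fun ω => Y 1 1 ω - Y 0 1 ω) ((hint 1 1).sub (hint 0 1))
        (hindS 1 1 (fun q => q.2.2.2 - q.2.1)
          ((measurable_snd.snd.snd).sub (measurable_snd.fst))),
      integral_sub (hint 1 1) (hint 0 1), mul_comm, mul_div_assoc, div_self hpos.ne',
      mul_one]
  · -- mandated reporters: effect = β_Y + E[Y(0,1)]
    intro hpos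
    have hS := hSmeas 0 1
    rw [setIntegral_congr_fun hS (g := fun ω => Y 1 1 ω - Y 0 0 ω)
        (fun ω hω => by obtain ⟨h0, h1⟩ := hω; rw [h0, h1]; ring),
      stmt7_aux μ _ hS (fun ω => Y 1 1 ω - Y 0 0 ω) ((hint 1 1).sub (hint 0 0))
        (hindS 0 1 (fun q => q.2.2.2 - q.1)
          ((measurable_snd.snd.snd).sub measurable_fst)),
      integral_sub (hint 1 1) (hint 0 0), integral_eq_zero_of_ae (hmand 0),
      mul_comm, mul_div_assoc, div_self hpos.ne', mul_one]
    ring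
  · -- masked reporters: effect = −E[Y(0,1)]
    intro hpos
    have hS := hSmeas 1 0
    rw [setIntegral_congr_fun hS (g := fun ω => Y 1 0 ω - Y 0 1 ω)
        (fun ω hω => by obtain ⟨h0, h1⟩ := hω; rw [h0, h1]; ring),
      stmt7_aux μ _ hS (fun ω => Y 1 0 ω - Y 0 1 ω) ((hint 1 0).sub (hint 0 1))
        (hindS 1 0 (fun q => q.2.2.1 - q.2.1)
          ((measurable_snd.snd.fst).sub (measurable_snd.fst))),
      integral_sub (hint 1 0) (hint 0 1), integral_eq_zero_of_ae (hmand 1),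
      mul_comm, mul_div_assoc, div_self hpos.ne', mul_one]
    ring
  · -- never reporters: effect = 0
    intro hpos
    have hS := hSmeas 0 0
    rw [setIntegral_congr_fun hS (g := fun ω => Y 1 0 ω - Y 0 0 ω)
        (fun ω hω => by obtain ⟨h0, h1⟩ := hω; rw [h0, h1]; ring),
      stmt7_aux μ _ hS (fun ω => Y 1 0 ω - Y 0 0 ω) ((hint 1 0).sub (hint 0 0))
        (hindS 0 0 (fun q => q.2.2.1 - q.1)
          ((measurable_snd.snd.fst).sub measurable_fst)),
      integral_sub (hint 1 0) (hint 0 0), integral_eq_zero_of_ae (hmand 1),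
      integral_eq_zero_of_ae (hmand 0)]
    simp
end

section
/- Under mandatory reporting and mutual independence assumptions, ATE_{M=1} = E[Y(1)−Y(0) | M=1] equals (w·θ)/(w·1) where θ=(β_Y, β_Y+E[Y(0,1)], −E[Y(0,1)], 0) and w = (P(S=al), [P(S=ma)+β_M]·P(D=1), P(S=ma)·P(D=0), 0), provided P(M=1)>0. -/
open MeasureTheory ProbabilityTheory

lemma aux_int {Ω : Type*} [MeasurableSpace Ω] {μ : Measure Ω} [IsProbabilityMeasure μ]
    {f : Ω → ℝ} (hm : Measurable f) (hb : ∀ ω, f ω = 0 ∨ f ω = 1) : Integrable f μ := by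
  refine (integrable_const (1:ℝ)).mono' hm.aestronglyMeasurable
    (Filter.Eventually.of_forall fun ω => ?_)
  rcases hb ω with h | h <;> simp [h]

lemma aux_key {Ω : Type*} [MeasurableSpace Ω] {μ : Measure Ω} [IsProbabilityMeasure μ]
    {α β : Type*} [MeasurableSpace α] [MeasurableSpace β]
    {X : Ω → α} {Z : Ω → β} (hX : Measurable X) (hZ : Measurable Z)
    (h : IndepFun X Z μ) {s : Set α} (hs : MeasurableSet s)
    {g : β → ℝ} (hg : Measurable g) (hgb : ∀ ω, g (Z ω) = 0 ∨ g (Z ω) = 1) :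
    ∫ ω, Set.indicator (X ⁻¹' s) (fun _ => (1:ℝ)) ω * g (Z ω) ∂μ
      = (μ (X ⁻¹' s)).toReal * ∫ ω, g (Z ω) ∂μ := by
  have hind : IndepFun (fun ω => Set.indicator s (fun _ => (1:ℝ)) (X ω)) (fun ω => g (Z ω)) μ :=
    h.comp (measurable_const.indicator hs) hg
  have heq : (fun ω => Set.indicator s (fun _ => (1:ℝ)) (X ω))
      = Set.indicator (X ⁻¹' s) (fun _ => (1:ℝ)) := by
    funext ω; by_cases hω : X ω ∈ s <;> simp [Set.indicator, hω]
  rw [heq] at hind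
  have h1 : Integrable (Set.indicator (X ⁻¹' s) (fun _ => (1:ℝ))) μ := by
    refine aux_int (measurable_const.indicator (hX hs)) fun ω => ?_
    by_cases hω : ω ∈ X ⁻¹' s <;> simp [hω]
  have h2 : Integrable (fun ω => g (Z ω)) μ := aux_int (hg.comp hZ) hgb
  have hmul := hind.integral_mul_eq_mul_integral h1.1 h2.1
  have hone : ∫ ω, Set.indicator (X ⁻¹' s) (fun _ => (1:ℝ)) ω ∂μ = (μ (X ⁻¹' s)).toReal := by
    exact integral_indicator_one (μ := μ) (hX hs)
  calc ∫ ω, Set.indicator (X ⁻¹' s) (fun _ => (1:ℝ)) ω * g (Z ω) ∂μ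
      = ∫ ω, (Set.indicator (X ⁻¹' s) (fun _ => (1:ℝ)) * fun ω => g (Z ω)) ω ∂μ := rfl
    _ = (μ (X ⁻¹' s)).toReal * ∫ ω, g (Z ω) ∂μ := by rw [hmul, hone]

/-- Under mandatory reporting and mutual independence, provided
P(M=1) > 0 (with M = D·M(1)+(1−D)·M(0)),
ATE_{M=1} = E[Y(1)−Y(0) | M=1] = (w·θ)/(w·1) where
θ = (β_Y, β_Y + E[Y(0,1)], −E[Y(0,1)], 0) and
w = (P(S=al), (P(S=ma)+β_M)·P(D=1), P(S=ma)·P(D=0), 0),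
with β_M = P(S=mi) − P(S=ma) (so P(S=ma)+β_M = P(S=mi)) and β_Y = E[Y(1,1)]−E[Y(0,1)]. -/
theorem stmt8 {Ω : Type*} [MeasurableSpace Ω] (μ : Measure Ω) [IsProbabilityMeasure μ]
    (D : Ω → ℝ) (M : Fin 2 → Ω → ℝ) (Y : Fin 2 → Fin 2 → Ω → ℝ)
    (hDm : Measurable D) (hMm : ∀ d, Measurable (M d)) (hYm : ∀ d m, Measurable (Y d m))
    (hDb : ∀ ω, D ω = 0 ∨ D ω = 1)
    (hMb : ∀ d ω, M d ω = 0 ∨ M d ω = 1)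
    (hYb : ∀ d m ω, Y d m ω = 0 ∨ Y d m ω = 1)
    (hindep1 : IndepFun D (fun ω => (M 0 ω, M 1 ω)) μ)
    (hindep2 : IndepFun (fun ω => (D ω, M 0 ω, M 1 ω))
      (fun ω => (Y 0 0 ω, Y 0 1 ω, Y 1 0 ω, Y 1 1 ω)) μ)
    (hmand : ∀ d : Fin 2, ∀ᵐ ω ∂μ, Y d 0 ω = 0)
    (hpos : 0 < (μ {ω | D ω * M 1 ω + (1 - D ω) * M 0 ω = 1}).toReal) :
    (∫ ω in {ω | D ω * M 1 ω + (1 - D ω) * M 0 ω = 1},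
        (((1 - M 1 ω) * Y 1 0 ω + M 1 ω * Y 1 1 ω)
          - ((1 - M 0 ω) * Y 0 0 ω + M 0 ω * Y 0 1 ω)) ∂μ)
      / (μ {ω | D ω * M 1 ω + (1 - D ω) * M 0 ω = 1}).toReal
    = ((μ {ω | M 0 ω = 1 ∧ M 1 ω = 1}).toReal
          * ((∫ ω, Y 1 1 ω ∂μ) - (∫ ω, Y 0 1 ω ∂μ))
        + ((μ {ω | M 0 ω = 1 ∧ M 1 ω = 0}).toReal
            + ((μ {ω | M 0 ω = 0 ∧ M 1 ω = 1}).toReal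
              - (μ {ω | M 0 ω = 1 ∧ M 1 ω = 0}).toReal))
          * (μ {ω | D ω = 1}).toReal
          * (((∫ ω, Y 1 1 ω ∂μ) - (∫ ω, Y 0 1 ω ∂μ)) + (∫ ω, Y 0 1 ω ∂μ))
        + (μ {ω | M 0 ω = 1 ∧ M 1 ω = 0}).toReal * (μ {ω | D ω = 0}).toReal
          * (-(∫ ω, Y 0 1 ω ∂μ)))
      / ((μ {ω | M 0 ω = 1 ∧ M 1 ω = 1}).toReal
        + ((μ {ω | M 0 ω = 1 ∧ M 1 ω = 0}).toReal
            + ((μ {ω | M 0 ω = 0 ∧ M 1 ω = 1}).toReal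
              - (μ {ω | M 0 ω = 1 ∧ M 1 ω = 0}).toReal))
          * (μ {ω | D ω = 1}).toReal
        + (μ {ω | M 0 ω = 1 ∧ M 1 ω = 0}).toReal * (μ {ω | D ω = 0}).toReal) := by
  classical
  set X : Ω → ℝ × ℝ × ℝ := fun ω => (D ω, M 0 ω, M 1 ω) with hXdef
  set Z : Ω → ℝ × ℝ × ℝ × ℝ := fun ω => (Y 0 0 ω, Y 0 1 ω, Y 1 0 ω, Y 1 1 ω) with hZdef
  have hXm : Measurable X := (hDm.prodMk ((hMm 0).prodMk (hMm 1)))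
  have hZm : Measurable Z :=
    ((hYm 0 0).prodMk (((hYm 0 1)).prodMk (((hYm 1 0)).prodMk (hYm 1 1))))
  set A : Set Ω := {ω | D ω * M 1 ω + (1 - D ω) * M 0 ω = 1} with hAdef
  have hAmeas : MeasurableSet A :=
    measurableSet_eq_fun ((hDm.mul (hMm 1)).add ((measurable_const.sub hDm).mul (hMm 0)))
      measurable_const
  set sB1 : Set (ℝ × ℝ × ℝ) :=
    {p | (p.1 * p.2.2 + (1 - p.1) * p.2.1 = 1) ∧ p.2.2 = 1} with hsB1def
  set sB0 : Set (ℝ × ℝ × ℝ) :=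
    {p | (p.1 * p.2.2 + (1 - p.1) * p.2.1 = 1) ∧ p.2.1 = 1} with hsB0def
  have hsB1 : MeasurableSet sB1 :=
    (measurableSet_eq_fun ((measurable_fst.mul (measurable_snd.comp measurable_snd)).add
        ((measurable_const.sub measurable_fst).mul (measurable_fst.comp measurable_snd)))
      measurable_const).inter
      (measurableSet_eq_fun (measurable_snd.comp measurable_snd) measurable_const)
  have hsB0 : MeasurableSet sB0 :=
    (measurableSet_eq_fun ((measurable_fst.mul (measurable_snd.comp measurable_snd)).add
        ((measurable_const.sub measurable_fst).mul (measurable_fst.comp measurable_snd)))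
      measurable_const).inter
      (measurableSet_eq_fun (measurable_fst.comp measurable_snd) measurable_const)
  -- step 1: a.e. simplification of the integrand
  have hae : ∀ᵐ ω ∂μ,
      (((1 - M 1 ω) * Y 1 0 ω + M 1 ω * Y 1 1 ω)
        - ((1 - M 0 ω) * Y 0 0 ω + M 0 ω * Y 0 1 ω))
      = M 1 ω * Y 1 1 ω - M 0 ω * Y 0 1 ω := by
    filter_upwards [hmand 0, hmand 1] with ω h0 h1
    rw [h0, h1]; ring
  have h1 : (∫ ω in A, (((1 - M 1 ω) * Y 1 0 ω + M 1 ω * Y 1 1 ω)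
        - ((1 - M 0 ω) * Y 0 0 ω + M 0 ω * Y 0 1 ω)) ∂μ)
      = ∫ ω in A, (M 1 ω * Y 1 1 ω - M 0 ω * Y 0 1 ω) ∂μ :=
    integral_congr_ae (ae_restrict_of_ae hae)
  -- integrability
  have int11 : Integrable (fun ω => M 1 ω * Y 1 1 ω) μ :=
    aux_int ((hMm 1).mul (hYm 1 1)) fun ω => by
      rcases hMb 1 ω with h | h <;> rcases hYb 1 1 ω with h' | h' <;> simp [h, h']
  have int01 : Integrable (fun ω => M 0 ω * Y 0 1 ω) μ :=
    aux_int ((hMm 0).mul (hYm 0 1)) fun ω => by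
      rcases hMb 0 ω with h | h <;> rcases hYb 0 1 ω with h' | h' <;> simp [h, h']
  have hsub : ∫ ω in A, (M 1 ω * Y 1 1 ω - M 0 ω * Y 0 1 ω) ∂μ
      = (∫ ω in A, M 1 ω * Y 1 1 ω ∂μ) - ∫ ω in A, M 0 ω * Y 0 1 ω ∂μ :=
    integral_sub int11.restrict int01.restrict
  -- step 2: indicator rewriting and independence
  have e1 : ∫ ω in A, M 1 ω * Y 1 1 ω ∂μ
      = (μ (X ⁻¹' sB1)).toReal * ∫ ω, Y 1 1 ω ∂μ := by
    rw [← integral_indicator hAmeas]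
    have hfun : A.indicator (fun ω => M 1 ω * Y 1 1 ω)
        = fun ω => Set.indicator (X ⁻¹' sB1) (fun _ => (1:ℝ)) ω * Y 1 1 ω := by
      funext ω
      by_cases hω : ω ∈ A
      · have hωA : D ω * M 1 ω + (1 - D ω) * M 0 ω = 1 := hω
        rcases hMb 1 ω with h | h <;> simp only [h, mul_one] at hωA <;>
          simp [Set.indicator, Set.mem_setOf_eq, hXdef, hsB1def, hω, h, hωA]
      · have : ω ∉ X ⁻¹' sB1 := by
          simp only [Set.mem_preimage, hsB1def, Set.mem_setOf_eq, hXdef]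
          intro hc; exact hω hc.1
        simp [Set.indicator, hω, this]
    rw [hfun]
    exact aux_key hXm hZm hindep2 hsB1 (measurable_snd.comp (measurable_snd.comp measurable_snd))
      (fun ω => hYb 1 1 ω)
  have e0 : ∫ ω in A, M 0 ω * Y 0 1 ω ∂μ
      = (μ (X ⁻¹' sB0)).toReal * ∫ ω, Y 0 1 ω ∂μ := by
    rw [← integral_indicator hAmeas]
    have hfun : A.indicator (fun ω => M 0 ω * Y 0 1 ω)
        = fun ω => Set.indicator (X ⁻¹' sB0) (fun _ => (1:ℝ)) ω * Y 0 1 ω := by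
      funext ω
      by_cases hω : ω ∈ A
      · have hωA : D ω * M 1 ω + (1 - D ω) * M 0 ω = 1 := hω
        rcases hMb 0 ω with h | h <;> simp only [h, mul_one] at hωA <;>
          simp [Set.indicator, Set.mem_setOf_eq, hXdef, hsB0def, hω, h, hωA]
      · have : ω ∉ X ⁻¹' sB0 := by
          simp only [Set.mem_preimage, hsB0def, Set.mem_setOf_eq, hXdef]
          intro hc; exact hω hc.1
        simp [Set.indicator, hω, this]
    rw [hfun]
    exact aux_key hXm hZm hindep2 hsB0 (measurable_fst.comp measurable_snd)
      (fun ω => hYb 0 1 ω)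
  -- measure computations
  have prod3 : ∀ a b c : ℝ, (μ {ω | D ω = a ∧ M 0 ω = b ∧ M 1 ω = c}).toReal
      = (μ {ω | D ω = a}).toReal * (μ {ω | M 0 ω = b ∧ M 1 ω = c}).toReal := by
    intro a b c
    have hset : {ω | D ω = a ∧ M 0 ω = b ∧ M 1 ω = c}
        = D ⁻¹' {a} ∩ (fun ω => (M 0 ω, M 1 ω)) ⁻¹' ({b} ×ˢ {c}) := by
      ext ω; simp [Set.mem_prod]
    have e1 : D ⁻¹' {a} = {ω | D ω = a} := by ext ω; simp
    have e2 : (fun ω => (M 0 ω, M 1 ω)) ⁻¹' ({b} ×ˢ {c}) = {ω | M 0 ω = b ∧ M 1 ω = c} := by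
      ext ω; simp [Set.mem_prod]
    rw [hset, hindep1.measure_inter_preimage_eq_mul _ _ (measurableSet_singleton a)
      ((measurableSet_singleton b).prod (measurableSet_singleton c)), e1, e2,
      ENNReal.toReal_mul]
  have hSmeas : ∀ a b c : ℝ, MeasurableSet {ω | D ω = a ∧ M 0 ω = b ∧ M 1 ω = c} := by
    intro a b c
    have : {ω | D ω = a ∧ M 0 ω = b ∧ M 1 ω = c}
        = {ω | D ω = a} ∩ ({ω | M 0 ω = b} ∩ {ω | M 1 ω = c}) := by ext ω; simp [and_assoc]
    rw [this]
    exact (measurableSet_eq_fun hDm measurable_const).inter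
      ((measurableSet_eq_fun (hMm 0) measurable_const).inter
        (measurableSet_eq_fun (hMm 1) measurable_const))
  have hdisjD : ∀ (b c b' c' : ℝ), Disjoint {ω | D ω = 1 ∧ M 0 ω = b ∧ M 1 ω = c}
      {ω | D ω = 0 ∧ M 0 ω = b' ∧ M 1 ω = c'} := by
    intro b c b' c'
    rw [Set.disjoint_left]
    rintro ω ⟨h1, -⟩ ⟨h0, -⟩
    rw [h1] at h0; norm_num at h0
  have ftop : ∀ s : Set Ω, μ s ≠ ⊤ := fun s => measure_ne_top μ s
  have hB1 : (μ (X ⁻¹' sB1)).toReal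
      = (μ {ω | D ω = 1}).toReal * (μ {ω | M 0 ω = 1 ∧ M 1 ω = 1}).toReal
        + (μ {ω | D ω = 1}).toReal * (μ {ω | M 0 ω = 0 ∧ M 1 ω = 1}).toReal
        + (μ {ω | D ω = 0}).toReal * (μ {ω | M 0 ω = 1 ∧ M 1 ω = 1}).toReal := by
    have hset : X ⁻¹' sB1
        = ({ω | D ω = 1 ∧ M 0 ω = 1 ∧ M 1 ω = 1} ∪ {ω | D ω = 1 ∧ M 0 ω = 0 ∧ M 1 ω = 1})
          ∪ {ω | D ω = 0 ∧ M 0 ω = 1 ∧ M 1 ω = 1} := by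
      ext ω
      simp only [Set.mem_preimage, hsB1def, Set.mem_setOf_eq, hXdef, Set.mem_union]
      rcases hDb ω with hd | hd <;> rcases hMb 0 ω with h0 | h0 <;> rcases hMb 1 ω with hm | hm <;>
        simp [hd, h0, hm] <;> norm_num
    have hd2 : Disjoint ({ω | D ω = 1 ∧ M 0 ω = 1 ∧ M 1 ω = 1}
        ∪ {ω | D ω = 1 ∧ M 0 ω = 0 ∧ M 1 ω = 1}) {ω | D ω = 0 ∧ M 0 ω = 1 ∧ M 1 ω = 1} :=
      Disjoint.union_left (hdisjD 1 1 1 1) (hdisjD 0 1 1 1)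
    have hd1 : Disjoint {ω | D ω = 1 ∧ M 0 ω = 1 ∧ M 1 ω = 1}
        {ω | D ω = 1 ∧ M 0 ω = 0 ∧ M 1 ω = 1} := by
      rw [Set.disjoint_left]
      rintro ω ⟨-, h1, -⟩ ⟨-, h0, -⟩
      rw [h1] at h0; norm_num at h0
    rw [hset, measure_union hd2 (hSmeas 0 1 1), measure_union hd1 (hSmeas 1 0 1),
      ENNReal.toReal_add (by finiteness) (ftop _), ENNReal.toReal_add (ftop _) (ftop _),
      prod3, prod3, prod3]
  have hB0 : (μ (X ⁻¹' sB0)).toReal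
      = (μ {ω | D ω = 1}).toReal * (μ {ω | M 0 ω = 1 ∧ M 1 ω = 1}).toReal
        + (μ {ω | D ω = 0}).toReal * (μ {ω | M 0 ω = 1 ∧ M 1 ω = 1}).toReal
        + (μ {ω | D ω = 0}).toReal * (μ {ω | M 0 ω = 1 ∧ M 1 ω = 0}).toReal := by
    have hset : X ⁻¹' sB0
        = ({ω | D ω = 1 ∧ M 0 ω = 1 ∧ M 1 ω = 1} ∪ {ω | D ω = 0 ∧ M 0 ω = 1 ∧ M 1 ω = 1})
          ∪ {ω | D ω = 0 ∧ M 0 ω = 1 ∧ M 1 ω = 0} := by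
      ext ω
      simp only [Set.mem_preimage, hsB0def, Set.mem_setOf_eq, hXdef, Set.mem_union]
      rcases hDb ω with hd | hd <;> rcases hMb 0 ω with h0 | h0 <;> rcases hMb 1 ω with hm | hm <;>
        simp [hd, h0, hm] <;> norm_num
    have hd2 : Disjoint ({ω | D ω = 1 ∧ M 0 ω = 1 ∧ M 1 ω = 1}
        ∪ {ω | D ω = 0 ∧ M 0 ω = 1 ∧ M 1 ω = 1}) {ω | D ω = 0 ∧ M 0 ω = 1 ∧ M 1 ω = 0} := by
      refine Disjoint.union_left (hdisjD 1 1 1 0) ?_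
      rw [Set.disjoint_left]
      rintro ω ⟨-, -, h1⟩ ⟨-, -, h0⟩
      rw [h1] at h0; norm_num at h0
    have hd1 : Disjoint {ω | D ω = 1 ∧ M 0 ω = 1 ∧ M 1 ω = 1}
        {ω | D ω = 0 ∧ M 0 ω = 1 ∧ M 1 ω = 1} := hdisjD 1 1 1 1
    rw [hset, measure_union hd2 (hSmeas 0 1 0), measure_union hd1 (hSmeas 0 1 1),
      ENNReal.toReal_add (by finiteness) (ftop _), ENNReal.toReal_add (ftop _) (ftop _),
      prod3, prod3, prod3]
  have hA : (μ A).toReal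
      = (μ {ω | D ω = 1}).toReal * (μ {ω | M 0 ω = 1 ∧ M 1 ω = 1}).toReal
        + (μ {ω | D ω = 1}).toReal * (μ {ω | M 0 ω = 0 ∧ M 1 ω = 1}).toReal
        + (μ {ω | D ω = 0}).toReal * (μ {ω | M 0 ω = 1 ∧ M 1 ω = 1}).toReal
        + (μ {ω | D ω = 0}).toReal * (μ {ω | M 0 ω = 1 ∧ M 1 ω = 0}).toReal := by
    have hset : A
        = (({ω | D ω = 1 ∧ M 0 ω = 1 ∧ M 1 ω = 1} ∪ {ω | D ω = 1 ∧ M 0 ω = 0 ∧ M 1 ω = 1})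
          ∪ {ω | D ω = 0 ∧ M 0 ω = 1 ∧ M 1 ω = 1}) ∪ {ω | D ω = 0 ∧ M 0 ω = 1 ∧ M 1 ω = 0} := by
      ext ω
      simp only [hAdef, Set.mem_setOf_eq, Set.mem_union]
      rcases hDb ω with hd | hd <;> rcases hMb 0 ω with h0 | h0 <;> rcases hMb 1 ω with hm | hm <;>
        simp [hd, h0, hm] <;> norm_num
    have hd3 : Disjoint (({ω | D ω = 1 ∧ M 0 ω = 1 ∧ M 1 ω = 1}
        ∪ {ω | D ω = 1 ∧ M 0 ω = 0 ∧ M 1 ω = 1}) ∪ {ω | D ω = 0 ∧ M 0 ω = 1 ∧ M 1 ω = 1})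
        {ω | D ω = 0 ∧ M 0 ω = 1 ∧ M 1 ω = 0} := by
      refine Disjoint.union_left (Disjoint.union_left (hdisjD 1 1 1 0) (hdisjD 0 1 1 0)) ?_
      rw [Set.disjoint_left]
      rintro ω ⟨-, -, h1⟩ ⟨-, -, h0⟩
      rw [h1] at h0; norm_num at h0
    have hd2 : Disjoint ({ω | D ω = 1 ∧ M 0 ω = 1 ∧ M 1 ω = 1}
        ∪ {ω | D ω = 1 ∧ M 0 ω = 0 ∧ M 1 ω = 1}) {ω | D ω = 0 ∧ M 0 ω = 1 ∧ M 1 ω = 1} :=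
      Disjoint.union_left (hdisjD 1 1 1 1) (hdisjD 0 1 1 1)
    have hd1 : Disjoint {ω | D ω = 1 ∧ M 0 ω = 1 ∧ M 1 ω = 1}
        {ω | D ω = 1 ∧ M 0 ω = 0 ∧ M 1 ω = 1} := by
      rw [Set.disjoint_left]
      rintro ω ⟨-, h1, -⟩ ⟨-, h0, -⟩
      rw [h1] at h0; norm_num at h0
    rw [hset, measure_union hd3 (hSmeas 0 1 0), measure_union hd2 (hSmeas 0 1 1),
      measure_union hd1 (hSmeas 1 0 1),
      ENNReal.toReal_add (by finiteness) (ftop _), ENNReal.toReal_add (by finiteness) (ftop _),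
      ENNReal.toReal_add (ftop _) (ftop _), prod3, prod3, prod3, prod3]
  have hDsum : (μ {ω | D ω = 0}).toReal + (μ {ω | D ω = 1}).toReal = 1 := by
    have hset : {ω | D ω = 0} ∪ {ω | D ω = 1} = Set.univ := by
      ext ω; simpa using hDb ω
    have hdisj : Disjoint {ω | D ω = 0} {ω | D ω = 1} := by
      rw [Set.disjoint_left]
      rintro ω h0 h1
      rw [Set.mem_setOf_eq] at h0 h1; rw [h0] at h1; norm_num at h1
    have := measure_union (μ := μ) hdisj (measurableSet_eq_fun hDm measurable_const)
    rw [hset, measure_univ] at this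
    rw [← ENNReal.toReal_add (ftop _) (ftop _), ← this]
    simp
  -- final assembly
  rw [h1, hsub, e1, e0]
  congr 1
  · rw [hB1, hB0]
    linear_combination ((μ {ω | M 0 ω = 1 ∧ M 1 ω = 1}).toReal
      * ((∫ ω, Y 1 1 ω ∂μ) - ∫ ω, Y 0 1 ω ∂μ)) * hDsum
  · rw [hA]
    linear_combination (μ {ω | M 0 ω = 1 ∧ M 1 ω = 1}).toReal * hDsum
end

section
/- Under mandatory reporting and mutual independence assumptions, ATT_{M=1} = E[Y(1)−Y(0) | D=1, M=1] equals (w·θ)/(w·1) where θ=(β_Y, β_Y+E[Y(0,1)], −E[Y(0,1)], 0) and w = (P(S=al), P(S=ma)+β_M, 0, 0), provided P(D=1, M=1)>0. -/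
open MeasureTheory ProbabilityTheory

lemma bdd01_integrable {Ω : Type*} [MeasurableSpace Ω] (μ : Measure Ω) [IsProbabilityMeasure μ]
    (f : Ω → ℝ) (hf : Measurable f) (h : ∀ ω, |f ω| ≤ 1) : Integrable f μ := by
  refine (integrable_const (1:ℝ)).mono' hf.aestronglyMeasurable ?_
  filter_upwards with ω
  simpa using h ω

lemma integral_ite_prop {Ω : Type*} [MeasurableSpace Ω] (μ : Measure Ω) [IsProbabilityMeasure μ]
    (p : Ω → Prop) [DecidablePred p] (hT : MeasurableSet {ω | p ω}) :
    ∫ ω, (if p ω then (1:ℝ) else 0) ∂μ = (μ {ω | p ω}).toReal := by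
  have h : (fun ω => if p ω then (1:ℝ) else 0) = Set.indicator {ω | p ω} 1 := by
    ext ω; by_cases h : p ω <;> simp [Set.indicator_apply, h]
  rw [h, integral_indicator_one hT]
  rfl

/-- Under mandatory reporting and mutual independence, provided
P(D=1, M=1) > 0 (with M = D·M(1)+(1−D)·M(0)),
ATT_{M=1} = E[Y(1)−Y(0) | D=1, M=1] = (w·θ)/(w·1) where
θ = (β_Y, β_Y + E[Y(0,1)], −E[Y(0,1)], 0) and w = (P(S=al), P(S=ma)+β_M, 0, 0),
with β_M = P(S=mi) − P(S=ma) and β_Y = E[Y(1,1)]−E[Y(0,1)]. -/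
theorem stmt9 {Ω : Type*} [MeasurableSpace Ω] (μ : Measure Ω) [IsProbabilityMeasure μ]
    (D : Ω → ℝ) (M : Fin 2 → Ω → ℝ) (Y : Fin 2 → Fin 2 → Ω → ℝ)
    (hDm : Measurable D) (hMm : ∀ d, Measurable (M d)) (hYm : ∀ d m, Measurable (Y d m))
    (hDb : ∀ ω, D ω = 0 ∨ D ω = 1)
    (hMb : ∀ d ω, M d ω = 0 ∨ M d ω = 1)
    (hYb : ∀ d m ω, Y d m ω = 0 ∨ Y d m ω = 1)
    (hindep1 : IndepFun D (fun ω => (M 0 ω, M 1 ω)) μ)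
    (hindep2 : IndepFun (fun ω => (D ω, M 0 ω, M 1 ω))
      (fun ω => (Y 0 0 ω, Y 0 1 ω, Y 1 0 ω, Y 1 1 ω)) μ)
    (hmand : ∀ d : Fin 2, ∀ᵐ ω ∂μ, Y d 0 ω = 0)
    (hpos : 0 < (μ {ω | D ω = 1 ∧ D ω * M 1 ω + (1 - D ω) * M 0 ω = 1}).toReal) :
    (∫ ω in {ω | D ω = 1 ∧ D ω * M 1 ω + (1 - D ω) * M 0 ω = 1},
        (((1 - M 1 ω) * Y 1 0 ω + M 1 ω * Y 1 1 ω)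
          - ((1 - M 0 ω) * Y 0 0 ω + M 0 ω * Y 0 1 ω)) ∂μ)
      / (μ {ω | D ω = 1 ∧ D ω * M 1 ω + (1 - D ω) * M 0 ω = 1}).toReal
    = ((μ {ω | M 0 ω = 1 ∧ M 1 ω = 1}).toReal
          * ((∫ ω, Y 1 1 ω ∂μ) - (∫ ω, Y 0 1 ω ∂μ))
        + ((μ {ω | M 0 ω = 1 ∧ M 1 ω = 0}).toReal
            + ((μ {ω | M 0 ω = 0 ∧ M 1 ω = 1}).toReal
              - (μ {ω | M 0 ω = 1 ∧ M 1 ω = 0}).toReal))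
          * (((∫ ω, Y 1 1 ω ∂μ) - (∫ ω, Y 0 1 ω ∂μ)) + (∫ ω, Y 0 1 ω ∂μ)))
      / ((μ {ω | M 0 ω = 1 ∧ M 1 ω = 1}).toReal
        + ((μ {ω | M 0 ω = 1 ∧ M 1 ω = 0}).toReal
            + ((μ {ω | M 0 ω = 0 ∧ M 1 ω = 1}).toReal
              - (μ {ω | M 0 ω = 1 ∧ M 1 ω = 0}).toReal))) := by
  classical
  -- The conditioning set equals {D = 1 ∧ M 1 = 1}
  have hSeq : {ω | D ω = 1 ∧ D ω * M 1 ω + (1 - D ω) * M 0 ω = 1}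
      = {ω | D ω = 1 ∧ M 1 ω = 1} := by
    ext ω
    simp only [Set.mem_setOf_eq]
    constructor
    · rintro ⟨h1, h2⟩; rw [h1] at h2; exact ⟨h1, by linarith⟩
    · rintro ⟨h1, h2⟩; exact ⟨h1, by rw [h1, h2]; ring⟩
  rw [hSeq]
  set S : Set Ω := {ω | D ω = 1 ∧ M 1 ω = 1} with hSdef
  have hSm : MeasurableSet S :=
    ((hDm (measurableSet_singleton 1)).inter ((hMm 1) (measurableSet_singleton 1)))
  -- indicator functions built from (D, M0, M1)
  set g1 : Ω → ℝ := fun ω => if D ω = 1 ∧ M 1 ω = 1 then 1 else 0 with hg1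
  set g2 : Ω → ℝ := fun ω => if D ω = 1 ∧ M 0 ω = 1 ∧ M 1 ω = 1 then 1 else 0 with hg2
  have hφ1 : Measurable (fun p : ℝ × ℝ × ℝ => if p.1 = 1 ∧ p.2.2 = 1 then (1:ℝ) else 0) := by
    refine Measurable.ite ?_ measurable_const measurable_const
    exact (measurable_fst (measurableSet_singleton 1)).inter
      (measurable_snd.snd (measurableSet_singleton 1))
  have hφ2 : Measurable (fun p : ℝ × ℝ × ℝ => if p.1 = 1 ∧ p.2.1 = 1 ∧ p.2.2 = 1 then (1:ℝ) else 0) := by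
    refine Measurable.ite ?_ measurable_const measurable_const
    exact (measurable_fst (measurableSet_singleton 1)).inter
      ((measurable_snd.fst (measurableSet_singleton 1)).inter
        (measurable_snd.snd (measurableSet_singleton 1)))
  have hg1m : Measurable g1 := hφ1.comp (hDm.prodMk ((hMm 0).prodMk (hMm 1)))
  have hg2m : Measurable g2 := hφ2.comp (hDm.prodMk ((hMm 0).prodMk (hMm 1)))
  -- independence of g_i with Y d m
  have hind1 : IndepFun g1 (Y 1 1) μ :=
    hindep2.comp hφ1 (measurable_snd.comp (measurable_snd.comp measurable_snd))
  have hind2 : IndepFun g2 (Y 0 1) μ :=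
    hindep2.comp hφ2 (measurable_fst.comp measurable_snd)
  -- integral of products
  have hprod1 : ∫ ω, g1 ω * Y 1 1 ω ∂μ = (∫ ω, g1 ω ∂μ) * ∫ ω, Y 1 1 ω ∂μ :=
    hind1.integral_fun_mul_eq_mul_integral hg1m.aestronglyMeasurable (hYm 1 1).aestronglyMeasurable
  have hprod2 : ∫ ω, g2 ω * Y 0 1 ω ∂μ = (∫ ω, g2 ω ∂μ) * ∫ ω, Y 0 1 ω ∂μ :=
    hind2.integral_fun_mul_eq_mul_integral hg2m.aestronglyMeasurable (hYm 0 1).aestronglyMeasurable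
  -- values of ∫ g_i
  have hig1 : ∫ ω, g1 ω ∂μ = (μ {ω | D ω = 1 ∧ M 1 ω = 1}).toReal :=
    integral_ite_prop μ _ hSm
  have hg2setm : MeasurableSet {ω | D ω = 1 ∧ M 0 ω = 1 ∧ M 1 ω = 1} :=
    (hDm (measurableSet_singleton 1)).inter
      (((hMm 0) (measurableSet_singleton 1)).inter ((hMm 1) (measurableSet_singleton 1)))
  have hig2 : ∫ ω, g2 ω ∂μ = (μ {ω | D ω = 1 ∧ M 0 ω = 1 ∧ M 1 ω = 1}).toReal :=
    integral_ite_prop μ _ hg2setm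
  -- independence of D from (M0, M1): split measures
  have hsplit := ProbabilityTheory.indepFun_iff_measure_inter_preimage_eq_mul.mp hindep1
  have hA : μ {ω | D ω = 1 ∧ M 1 ω = 1} = μ {ω | D ω = 1} * μ {ω | M 1 ω = 1} := by
    have := hsplit {1} (Set.univ ×ˢ {1}) (measurableSet_singleton 1)
      (MeasurableSet.univ.prod (measurableSet_singleton 1))
    have e1 : D ⁻¹' {1} ∩ (fun ω => (M 0 ω, M 1 ω)) ⁻¹' (Set.univ ×ˢ {1})
        = {ω | D ω = 1 ∧ M 1 ω = 1} := by
      ext ω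
      exact ⟨fun h => ⟨h.1, h.2.2⟩, fun h => ⟨h.1, ⟨trivial, h.2⟩⟩⟩
    have e2 : (fun ω => (M 0 ω, M 1 ω)) ⁻¹' (Set.univ ×ˢ {1}) = {ω | M 1 ω = 1} := by
      ext ω
      exact ⟨fun h => h.2, fun h => ⟨trivial, h⟩⟩
    have e3 : D ⁻¹' {1} = {ω | D ω = 1} := rfl
    rw [e1, e2, e3] at this
    exact this
  have hB : μ {ω | D ω = 1 ∧ M 0 ω = 1 ∧ M 1 ω = 1}
      = μ {ω | D ω = 1} * μ {ω | M 0 ω = 1 ∧ M 1 ω = 1} := by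
    have := hsplit {1} ({1} ×ˢ {1}) (measurableSet_singleton 1)
      ((measurableSet_singleton 1).prod (measurableSet_singleton 1))
    have e1 : D ⁻¹' {1} ∩ (fun ω => (M 0 ω, M 1 ω)) ⁻¹' ({1} ×ˢ {1})
        = {ω | D ω = 1 ∧ M 0 ω = 1 ∧ M 1 ω = 1} := by
      ext ω
      exact ⟨fun h => ⟨h.1, h.2.1, h.2.2⟩, fun h => ⟨h.1, h.2.1, h.2.2⟩⟩
    have e2 : (fun ω => (M 0 ω, M 1 ω)) ⁻¹' ({1} ×ˢ {1}) = {ω | M 0 ω = 1 ∧ M 1 ω = 1} := by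
      ext ω
      exact ⟨fun h => ⟨h.1, h.2⟩, fun h => ⟨h.1, h.2⟩⟩
    rw [e1, e2] at this
    exact this
  -- split {M1 = 1} by M0
  have hC : μ {ω | M 1 ω = 1}
      = μ {ω | M 0 ω = 1 ∧ M 1 ω = 1} + μ {ω | M 0 ω = 0 ∧ M 1 ω = 1} := by
    have hu : {ω | M 1 ω = 1}
        = {ω | M 0 ω = 1 ∧ M 1 ω = 1} ∪ {ω | M 0 ω = 0 ∧ M 1 ω = 1} := by
      ext ω
      rcases hMb 0 ω with h | h <;> simp [h]
    have hd : Disjoint {ω | M 0 ω = 1 ∧ M 1 ω = 1} {ω | M 0 ω = 0 ∧ M 1 ω = 1} := by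
      rw [Set.disjoint_left]
      rintro ω ⟨h1, _⟩ ⟨h0, _⟩
      rw [h1] at h0; norm_num at h0
    rw [hu, measure_union hd
      (((hMm 0) (measurableSet_singleton 0)).inter ((hMm 1) (measurableSet_singleton 1)))]
  -- integrability facts
  have hYint : ∀ d m, Integrable (Y d m) μ := by
    intro d m
    refine bdd01_integrable μ _ (hYm d m) fun ω => ?_
    rcases hYb d m ω with h | h <;> simp [h]
  have hint1 : Integrable (fun ω => g1 ω * Y 1 1 ω) μ := by
    refine bdd01_integrable μ _ (hg1m.mul (hYm 1 1)) fun ω => ?_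
    rw [abs_mul]
    have h1 : |g1 ω| ≤ 1 := by rw [hg1]; dsimp only; split <;> simp
    have h2 : |Y 1 1 ω| ≤ 1 := by rcases hYb 1 1 ω with h | h <;> simp [h]
    calc |g1 ω| * |Y 1 1 ω| ≤ 1 * 1 := by
          exact mul_le_mul h1 h2 (abs_nonneg _) zero_le_one
      _ = 1 := by norm_num
  have hint2 : Integrable (fun ω => g2 ω * Y 0 1 ω) μ := by
    refine bdd01_integrable μ _ (hg2m.mul (hYm 0 1)) fun ω => ?_
    rw [abs_mul]
    have h1 : |g2 ω| ≤ 1 := by rw [hg2]; dsimp only; split <;> simp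
    have h2 : |Y 0 1 ω| ≤ 1 := by rcases hYb 0 1 ω with h | h <;> simp [h]
    calc |g2 ω| * |Y 0 1 ω| ≤ 1 * 1 := by
          exact mul_le_mul h1 h2 (abs_nonneg _) zero_le_one
      _ = 1 := by norm_num
  -- the set integral
  have hLHS : (∫ ω in S,
        (((1 - M 1 ω) * Y 1 0 ω + M 1 ω * Y 1 1 ω)
          - ((1 - M 0 ω) * Y 0 0 ω + M 0 ω * Y 0 1 ω)) ∂μ)
      = (∫ ω, g1 ω * Y 1 1 ω ∂μ) - ∫ ω, g2 ω * Y 0 1 ω ∂μ := by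
    rw [← integral_indicator hSm, ← integral_sub hint1 hint2]
    apply integral_congr_ae
    filter_upwards [hmand 0] with ω h00
    by_cases hω : ω ∈ S
    · have hd1 : D ω = 1 := hω.1
      have hm1 : M 1 ω = 1 := hω.2
      have hg1v : g1 ω = 1 := by rw [hg1]; simp [hd1, hm1]
      have hg2v : g2 ω = M 0 ω := by
        rw [hg2]; dsimp only
        rcases hMb 0 ω with h | h <;> simp [hd1, hm1, h]
      rw [Set.indicator_of_mem hω, hg1v, hg2v, hm1, h00]
      ring
    · have hns : ¬ (D ω = 1 ∧ M 1 ω = 1) := hω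
      have hg1v : g1 ω = 0 := by rw [hg1]; simp [hns]
      have hg2v : g2 ω = 0 := by
        rw [hg2]; dsimp only
        rw [if_neg]; rintro ⟨h1, h2, h3⟩; exact hns ⟨h1, h3⟩
      rw [Set.indicator_of_notMem hω, hg1v, hg2v]
      ring
  rw [hLHS, hprod1, hprod2, hig1, hig2, hB, hA]
  -- now pure arithmetic
  set a := (μ {ω | D ω = 1}).toReal with ha
  set p11 := (μ {ω | M 0 ω = 1 ∧ M 1 ω = 1}).toReal with hp11
  set p01 := (μ {ω | M 0 ω = 0 ∧ M 1 ω = 1}).toReal with hp01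
  set p10 := (μ {ω | M 0 ω = 1 ∧ M 1 ω = 0}).toReal with hp10
  set E1 := ∫ ω, Y 1 1 ω ∂μ with hE1
  set E0 := ∫ ω, Y 0 1 ω ∂μ with hE0
  have hq : (μ {ω | M 1 ω = 1}).toReal = p11 + p01 := by
    rw [hC, ENNReal.toReal_add (measure_ne_top _ _) (measure_ne_top _ _)]
  have htm : ∀ s t : Set Ω, ((μ s * μ t).toReal) = (μ s).toReal * (μ t).toReal := by
    intro s t; exact ENNReal.toReal_mul
  rw [htm, htm, hq]
  -- positivity
  have hpos' : 0 < (μ S).toReal := by rw [hSeq] at hpos; exact hpos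
  have hSA : (μ S).toReal = a * (p11 + p01) := by
    rw [hSdef, hA, ENNReal.toReal_mul, hq]
  rw [hSA] at hpos'
  have ha0 : 0 < a := by
    rcases lt_or_ge 0 a with h | h
    · exact h
    · exfalso
      have : a * (p11 + p01) ≤ 0 := by
        have hpq : 0 ≤ p11 + p01 := by positivity
        exact mul_nonpos_of_nonpos_of_nonneg h hpq
      linarith
  have hq0 : 0 < p11 + p01 := by
    rcases lt_or_ge 0 (p11 + p01) with h | h
    · exact h
    · exfalso
      have : a * (p11 + p01) ≤ 0 := mul_nonpos_of_nonneg_of_nonpos (le_of_lt ha0) h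
      linarith
  rw [← ha, ← hp11]
  field_simp [hq0.ne']
  ring
end

section
/- There exists a joint distribution of binary (D, M(0), M(1), Y(d,m)) satisfying mutual independence and mandatory reporting with β_M > 0 and β_Y > 0 but ATE_{M=1} < 0. Concretely, with β_M=β_Y=0.01, P(S=al)=0.1, P(S=ma)=0.05, E[Y(0,1)]=0.1, P(D=1)=0.01, one obtains ATE_{M=1} = −0.003884 < 0. -/
open MeasureTheory ProbabilityTheory

open scoped NNReal ENNReal Classical

namespace Stmt10

noncomputable section

def q : Fin 7 → ℝ≥0 := ![1/100, 3/20, 2/3, 6/85, 1/10, 11/100, 0]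
def r : Fin 7 → ℝ≥0 := ![99/100, 17/20, 1/3, 79/85, 9/10, 89/100, 1]

def P (i : Fin 7) : Measure (Fin 2) :=
  (q i : ℝ≥0∞) • Measure.dirac 1 + (r i : ℝ≥0∞) • Measure.dirac 0

lemma qr (i : Fin 7) : (q i : ℝ≥0∞) + (r i : ℝ≥0∞) = 1 := by
  rw [← ENNReal.coe_add, ← ENNReal.coe_one, ENNReal.coe_inj]
  apply NNReal.coe_injective
  push_cast
  fin_cases i <;> norm_num [q, r]

lemma P_one (i : Fin 7) : P i {1} = q i := by
  simp [P, Measure.dirac_apply]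

lemma P_zero (i : Fin 7) : P i {0} = r i := by
  simp [P, Measure.dirac_apply]

lemma P_univ (i : Fin 7) : P i Set.univ = 1 := by
  simp [P, Measure.dirac_apply]; exact qr i

instance (i : Fin 7) : IsProbabilityMeasure (P i) := ⟨P_univ i⟩

def μ : Measure (Fin 7 → Fin 2) := Measure.pi P

instance : IsProbabilityMeasure μ := Measure.pi.instIsProbabilityMeasure _

lemma meas (A : Set (Fin 7 → Fin 2)) : MeasurableSet A := A.to_countable.measurableSet

lemma f2 : ∀ a : Fin 2, a = 0 ∨ a = 1 := by decide

def b (i : Fin 7) (ω : Fin 7 → Fin 2) : ℝ := if ω i = 1 then 1 else 0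

def D : (Fin 7 → Fin 2) → ℝ := b 0
def M : Fin 2 → (Fin 7 → Fin 2) → ℝ :=
  fun d ω => if d = 0 then b 1 ω else (if ω 1 = 1 then b 2 ω else b 3 ω)
def Y : Fin 2 → Fin 2 → (Fin 7 → Fin 2) → ℝ :=
  fun d m ω => if m = 0 then 0 else (if d = 0 then b 4 ω else b 5 ω)

lemma mem7 (s : Fin 7 → Set (Fin 2)) (ω : Fin 7 → Fin 2) :
    ω ∈ Set.univ.pi s ↔ ω 0 ∈ s 0 ∧ ω 1 ∈ s 1 ∧ ω 2 ∈ s 2 ∧ ω 3 ∈ s 3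
      ∧ ω 4 ∈ s 4 ∧ ω 5 ∈ s 5 ∧ ω 6 ∈ s 6 := by
  rw [Set.mem_univ_pi]
  constructor
  · intro h; exact ⟨h 0, h 1, h 2, h 3, h 4, h 5, h 6⟩
  · rintro ⟨h0, h1, h2, h3, h4, h5, h6⟩ i; fin_cases i <;> assumption

lemma cyl (s : Fin 7 → Set (Fin 2)) : μ (Set.univ.pi s) = ∏ i, P i (s i) :=
  Measure.pi_pi P s

-- mutual independence of coordinates
lemma hIndep :
    iIndepFun (fun (i : Fin 7) (ω : Fin 7 → Fin 2) => ω i) μ := by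
  rw [iIndepFun_iff_measure_inter_preimage_eq_mul]
  intro S sets _
  have h1 : (⋂ i ∈ S, (fun ω : Fin 7 → Fin 2 => ω i) ⁻¹' sets i)
      = Set.univ.pi (fun i => if i ∈ S then sets i else Set.univ) := by
    ext ω
    simp only [Set.mem_iInter, Set.mem_preimage, Set.mem_univ_pi]
    constructor
    · intro h i; by_cases hi : i ∈ S <;> simp [hi, h]
    · intro h i hi; have := h i; simpa [hi] using this
  rw [h1, cyl]
  have h2 : ∀ i, P i (if i ∈ S then sets i else Set.univ)
      = if i ∈ S then P i (sets i) else 1 := by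
    intro i; by_cases hi : i ∈ S <;> simp [hi, P_univ]
  simp_rw [h2]
  rw [Finset.prod_ite_mem Finset.univ S (fun i => P i (sets i)), Finset.univ_inter]
  refine Finset.prod_congr rfl fun i _ => ?_
  have h3 : (fun ω : Fin 7 → Fin 2 => ω i) ⁻¹' sets i
      = Set.univ.pi (fun j => if j = i then sets i else Set.univ) := by
    ext ω
    simp only [Set.mem_preimage, Set.mem_univ_pi]
    constructor
    · intro h j; by_cases hj : j = i <;> simp [hj, h]
    · intro h; have := h i; simpa using this
  rw [h3, cyl]
  have h4 : ∀ j, P j (if j = i then sets i else Set.univ)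
      = if j = i then P i (sets i) else 1 := by
    intro j; by_cases hj : j = i <;> simp [hj, P_univ]
  simp_rw [h4]
  simp


def cylSet (s0 s1 s2 s3 s4 s5 s6 : Set (Fin 2)) : Set (Fin 7 → Fin 2) :=
  {ω | ω 0 ∈ s0 ∧ ω 1 ∈ s1 ∧ ω 2 ∈ s2 ∧ ω 3 ∈ s3 ∧ ω 4 ∈ s4 ∧ ω 5 ∈ s5 ∧ ω 6 ∈ s6}

lemma μ_cylSet (s0 s1 s2 s3 s4 s5 s6 : Set (Fin 2)) :
    μ (cylSet s0 s1 s2 s3 s4 s5 s6)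
      = P 0 s0 * P 1 s1 * P 2 s2 * P 3 s3 * P 4 s4 * P 5 s5 * P 6 s6 := by
  have h : cylSet s0 s1 s2 s3 s4 s5 s6 = Set.univ.pi ![s0,s1,s2,s3,s4,s5,s6] := by
    ext ω; rw [mem7]; rfl
  rw [h, cyl, Fin.prod_univ_seven]; rfl

lemma toReal_cyl (s0 s1 s2 s3 s4 s5 s6 : Set (Fin 2)) :
    (μ (cylSet s0 s1 s2 s3 s4 s5 s6)).toReal
      = (P 0 s0).toReal * (P 1 s1).toReal * (P 2 s2).toReal * (P 3 s3).toReal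
        * (P 4 s4).toReal * (P 5 s5).toReal * (P 6 s6).toReal := by
  rw [μ_cylSet]; simp [ENNReal.toReal_mul]

lemma P_one_toReal (i : Fin 7) : (P i {1}).toReal = (q i : ℝ) := by
  rw [P_one]; simp

lemma P_zero_toReal (i : Fin 7) : (P i {0}).toReal = (r i : ℝ) := by
  rw [P_zero]; simp

lemma P_univ_toReal (i : Fin 7) : (P i Set.univ).toReal = 1 := by
  rw [P_univ]; simp

lemma qv : (q 0 : ℝ) = 1/100 ∧ (q 1 : ℝ) = 3/20 ∧ (q 2 : ℝ) = 2/3 ∧ (q 3 : ℝ) = 6/85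
    ∧ (q 4 : ℝ) = 1/10 ∧ (q 5 : ℝ) = 11/100 ∧ (r 0 : ℝ) = 99/100 ∧ (r 1 : ℝ) = 17/20 := by
  norm_num [show q 0 = 1/100 from rfl, show q 1 = 3/20 from rfl, show q 2 = 2/3 from rfl,
    show q 3 = 6/85 from rfl, show q 4 = 1/10 from rfl, show q 5 = 11/100 from rfl,
    show r 0 = 99/100 from rfl, show r 1 = 17/20 from rfl]

lemma qv0 : (q 0 : ℝ) = 1/100 := qv.1
lemma qv1 : (q 1 : ℝ) = 3/20 := qv.2.1
lemma qv2 : (q 2 : ℝ) = 2/3 := qv.2.2.1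
lemma qv3 : (q 3 : ℝ) = 6/85 := qv.2.2.2.1
lemma qv4 : (q 4 : ℝ) = 1/10 := qv.2.2.2.2.1
lemma qv5 : (q 5 : ℝ) = 11/100 := qv.2.2.2.2.2.1
lemma rv0 : (r 0 : ℝ) = 99/100 := qv.2.2.2.2.2.2.1
lemma rv1 : (r 1 : ℝ) = 17/20 := qv.2.2.2.2.2.2.2
lemma rv2 : (r 2 : ℝ) = 1/3 := by
  norm_num [show r 2 = 1/3 from rfl]

def u : Set (Fin 2) := Set.univ
def o : Set (Fin 2) := {1}
def z : Set (Fin 2) := {0}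

lemma toReal_union {A B : Set (Fin 7 → Fin 2)} (h : Disjoint A B) :
    (μ (A ∪ B)).toReal = (μ A).toReal + (μ B).toReal := by
  rw [measure_union h (meas B),
    ENNReal.toReal_add (measure_ne_top μ _) (measure_ne_top μ _)]

lemma integral_ind (f : (Fin 7 → Fin 2) → ℝ) (A : Set (Fin 7 → Fin 2))
    (h : ∀ ω, f ω = A.indicator (fun _ => (1:ℝ)) ω) :
    ∫ ω, f ω ∂μ = (μ A).toReal := by
  rw [funext h, integral_indicator_const (1:ℝ) (meas A), smul_eq_mul, mul_one]; rfl

-- named cylinders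
def AM0 : Set (Fin 7 → Fin 2) := cylSet u o u u u u u
def A11 : Set (Fin 7 → Fin 2) := cylSet u o o u u u u
def A10 : Set (Fin 7 → Fin 2) := cylSet u o z u u u u
def B01 : Set (Fin 7 → Fin 2) := cylSet u z u o u u u
def AY01 : Set (Fin 7 → Fin 2) := cylSet u u u u o u u
def AY11 : Set (Fin 7 → Fin 2) := cylSet u u u u u o u
def AD : Set (Fin 7 → Fin 2) := cylSet o u u u u u u
def C1 : Set (Fin 7 → Fin 2) := cylSet o o o u u u u
def C2 : Set (Fin 7 → Fin 2) := cylSet o z u o u u u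
def C3 : Set (Fin 7 → Fin 2) := cylSet z o u u u u u
def R : Set (Fin 7 → Fin 2) := C1 ∪ (C2 ∪ C3)
def C1' : Set (Fin 7 → Fin 2) := cylSet o o o u u o u
def C2' : Set (Fin 7 → Fin 2) := cylSet o z u o u o u
def C3' : Set (Fin 7 → Fin 2) := cylSet z o o u u o u
def S1 : Set (Fin 7 → Fin 2) := C1' ∪ (C2' ∪ C3')
def E1 : Set (Fin 7 → Fin 2) := cylSet o o o u o u u
def E2 : Set (Fin 7 → Fin 2) := cylSet z o u u o u u
def S2 : Set (Fin 7 → Fin 2) := E1 ∪ E2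

lemma vAM0 : (μ AM0).toReal = 0.15 := by
  rw [AM0, toReal_cyl]
  simp only [u, o, z, P_one_toReal, P_zero_toReal, P_univ_toReal]
  rw [qv1]; norm_num

lemma vA11 : (μ A11).toReal = 0.1 := by
  rw [A11, toReal_cyl]
  simp only [u, o, z, P_one_toReal, P_zero_toReal, P_univ_toReal]
  rw [qv1, qv2]; norm_num

lemma vA10 : (μ A10).toReal = 0.05 := by
  rw [A10, toReal_cyl]
  simp only [u, o, z, P_one_toReal, P_zero_toReal, P_univ_toReal]
  rw [qv1, rv2]; norm_num

lemma vB01 : (μ B01).toReal = 0.06 := by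
  rw [B01, toReal_cyl]
  simp only [u, o, z, P_one_toReal, P_zero_toReal, P_univ_toReal]
  rw [rv1, qv3]; norm_num

lemma vAY01 : (μ AY01).toReal = 0.1 := by
  rw [AY01, toReal_cyl]
  simp only [u, o, z, P_one_toReal, P_zero_toReal, P_univ_toReal]
  rw [qv4]; norm_num

lemma vAY11 : (μ AY11).toReal = 0.11 := by
  rw [AY11, toReal_cyl]
  simp only [u, o, z, P_one_toReal, P_zero_toReal, P_univ_toReal]
  rw [qv5]; norm_num

lemma vAD : (μ AD).toReal = 0.01 := by
  rw [AD, toReal_cyl]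
  simp only [u, o, z, P_one_toReal, P_zero_toReal, P_univ_toReal]
  rw [qv0]; norm_num

lemma vC1 : (μ C1).toReal = 0.001 := by
  rw [C1, toReal_cyl]
  simp only [u, o, z, P_one_toReal, P_zero_toReal, P_univ_toReal]
  rw [qv0, qv1, qv2]; norm_num

lemma vC2 : (μ C2).toReal = 0.0006 := by
  rw [C2, toReal_cyl]
  simp only [u, o, z, P_one_toReal, P_zero_toReal, P_univ_toReal]
  rw [qv0, rv1, qv3]; norm_num

lemma vC3 : (μ C3).toReal = 0.1485 := by
  rw [C3, toReal_cyl]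
  simp only [u, o, z, P_one_toReal, P_zero_toReal, P_univ_toReal]
  rw [rv0, qv1]; norm_num

lemma vC1' : (μ C1').toReal = 0.00011 := by
  rw [C1', toReal_cyl]
  simp only [u, o, z, P_one_toReal, P_zero_toReal, P_univ_toReal]
  rw [qv0, qv1, qv2, qv5]; norm_num

lemma vC2' : (μ C2').toReal = 0.000066 := by
  rw [C2', toReal_cyl]
  simp only [u, o, z, P_one_toReal, P_zero_toReal, P_univ_toReal]
  rw [qv0, rv1, qv3, qv5]; norm_num

lemma vC3' : (μ C3').toReal = 0.01089 := by
  rw [C3', toReal_cyl]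
  simp only [u, o, z, P_one_toReal, P_zero_toReal, P_univ_toReal]
  rw [rv0, qv1, qv2, qv5]; norm_num

lemma vE1 : (μ E1).toReal = 0.0001 := by
  rw [E1, toReal_cyl]
  simp only [u, o, z, P_one_toReal, P_zero_toReal, P_univ_toReal]
  rw [qv0, qv1, qv2, qv4]; norm_num

lemma vE2 : (μ E2).toReal = 0.01485 := by
  rw [E2, toReal_cyl]
  simp only [u, o, z, P_one_toReal, P_zero_toReal, P_univ_toReal]
  rw [rv0, qv1, qv4]; norm_num

-- disjointness helpers
lemma disjC12 : Disjoint C1 C2 := by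
  rw [Set.disjoint_left]
  intro ω h1 h2
  simp [C1, C2, cylSet, u, o, z] at h1 h2
  rw [h1.2.1] at h2; exact absurd h2.2.1 (by decide)

lemma disjC13 : Disjoint C1 C3 := by
  rw [Set.disjoint_left]
  intro ω h1 h2
  simp [C1, C3, cylSet, u, o, z] at h1 h2
  rw [h1.1] at h2; exact absurd h2.1 (by decide)

lemma disjC23 : Disjoint C2 C3 := by
  rw [Set.disjoint_left]
  intro ω h1 h2
  simp [C2, C3, cylSet, u, o, z] at h1 h2
  rw [h1.1] at h2; exact absurd h2.1 (by decide)

lemma vR : (μ R).toReal = 0.1501 := by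
  rw [R, toReal_union (by exact Set.disjoint_union_right.2 ⟨disjC12, disjC13⟩),
    toReal_union disjC23, vC1, vC2, vC3]
  norm_num

lemma disjC12' : Disjoint C1' C2' := by
  rw [Set.disjoint_left]
  intro ω h1 h2
  simp [C1', C2', cylSet, u, o, z] at h1 h2
  rw [h1.2.1] at h2; exact absurd h2.2.1 (by decide)

lemma disjC13' : Disjoint C1' C3' := by
  rw [Set.disjoint_left]
  intro ω h1 h2
  simp [C1', C3', cylSet, u, o, z] at h1 h2
  rw [h1.1] at h2; exact absurd h2.1 (by decide)

lemma disjC23' : Disjoint C2' C3' := by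
  rw [Set.disjoint_left]
  intro ω h1 h2
  simp [C2', C3', cylSet, u, o, z] at h1 h2
  rw [h1.1] at h2; exact absurd h2.1 (by decide)

lemma vS1 : (μ S1).toReal = 0.011066 := by
  rw [S1, toReal_union (Set.disjoint_union_right.2 ⟨disjC12', disjC13'⟩),
    toReal_union disjC23', vC1', vC2', vC3']
  norm_num

lemma disjE12 : Disjoint E1 E2 := by
  rw [Set.disjoint_left]
  intro ω h1 h2
  simp [E1, E2, cylSet, u, o, z] at h1 h2
  rw [h1.1] at h2; exact absurd h2.1 (by decide)

lemma vS2 : (μ S2).toReal = 0.01495 := by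
  rw [S2, toReal_union disjE12, vE1, vE2]; norm_num

-- function characterizations
lemma bcases (i : Fin 7) (ω : Fin 7 → Fin 2) : b i ω = 0 ∨ b i ω = 1 := by
  unfold b; split <;> simp

lemma hM0fun : ∀ ω, M 0 ω = AM0.indicator (fun _ => (1:ℝ)) ω := by
  intro ω
  rcases f2 (ω 1) with h1|h1 <;>
    simp [Set.indicator_apply, AM0, cylSet, u, o, z, M, b, h1]

lemma hM1fun : ∀ ω, M 1 ω = (A11 ∪ B01).indicator (fun _ => (1:ℝ)) ω := by
  intro ω
  rcases f2 (ω 1) with h1|h1 <;> rcases f2 (ω 2) with h2|h2 <;>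
    rcases f2 (ω 3) with h3|h3 <;>
    simp [Set.indicator_apply, A11, B01, cylSet, u, o, z, M, b, h1, h2, h3]

lemma hY01fun : ∀ ω, Y 0 1 ω = AY01.indicator (fun _ => (1:ℝ)) ω := by
  intro ω
  rcases f2 (ω 4) with h4|h4 <;>
    simp [Set.indicator_apply, AY01, cylSet, u, o, z, Y, b, h4]

lemma hY11fun : ∀ ω, Y 1 1 ω = AY11.indicator (fun _ => (1:ℝ)) ω := by
  intro ω
  rcases f2 (ω 5) with h5|h5 <;>
    simp [Set.indicator_apply, AY11, cylSet, u, o, z, Y, b, h5]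

lemma hSetM : {ω | M 0 ω = 1 ∧ M 1 ω = 1} = A11 := by
  ext ω
  rcases f2 (ω 1) with h1|h1 <;> rcases f2 (ω 2) with h2|h2 <;>
    rcases f2 (ω 3) with h3|h3 <;>
    simp [A11, cylSet, u, o, z, M, b, h1, h2, h3]

lemma hSetM10 : {ω | M 0 ω = 1 ∧ M 1 ω = 0} = A10 := by
  ext ω
  rcases f2 (ω 1) with h1|h1 <;> rcases f2 (ω 2) with h2|h2 <;>
    rcases f2 (ω 3) with h3|h3 <;>
    simp [A10, cylSet, u, o, z, M, b, h1, h2, h3]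

lemma hSetD : {ω | D ω = 1} = AD := by
  ext ω
  rcases f2 (ω 0) with h0|h0 <;>
    simp [AD, cylSet, u, o, z, D, b, h0]

lemma hSetR : {ω | D ω * M 1 ω + (1 - D ω) * M 0 ω = 1} = R := by
  ext ω
  rcases f2 (ω 0) with h0|h0 <;> rcases f2 (ω 1) with h1|h1 <;>
    rcases f2 (ω 2) with h2|h2 <;> rcases f2 (ω 3) with h3|h3 <;>
    simp [R, C1, C2, C3, cylSet, u, o, z, D, M, b, h0, h1, h2, h3]

set_option maxHeartbeats 1600000 in
lemma hIndicator : ∀ ω, R.indicator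
      (fun ω => (((1 - M 1 ω) * Y 1 0 ω + M 1 ω * Y 1 1 ω)
        - ((1 - M 0 ω) * Y 0 0 ω + M 0 ω * Y 0 1 ω))) ω
    = S1.indicator (fun _ => (1:ℝ)) ω - S2.indicator (fun _ => (1:ℝ)) ω := by
  intro ω
  rcases f2 (ω 0) with h0|h0 <;> rcases f2 (ω 1) with h1|h1 <;>
    rcases f2 (ω 2) with h2|h2 <;> rcases f2 (ω 3) with h3|h3 <;>
    rcases f2 (ω 4) with h4|h4 <;> rcases f2 (ω 5) with h5|h5 <;>
    simp only [Set.indicator_apply, Set.mem_union, R, S1, S2, C1, C2, C3, C1', C2',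
      C3', E1, E2, cylSet, Set.mem_setOf_eq, u, o, z, Set.mem_univ,
      Set.mem_singleton_iff, and_true, true_and, D, M, Y, b, h0, h1, h2, h3, h4, h5] <;>
    norm_num

lemma disjA11B01 : Disjoint A11 B01 := by
  rw [Set.disjoint_left]
  intro ω h1 h2
  simp [A11, B01, cylSet, u, o, z] at h1 h2
  rw [h1.1] at h2; exact absurd h2.1 (by decide)

-- independence
lemma indepDM : IndepFun D (fun ω => (M 0 ω, M 1 ω)) μ := by
  have h := hIndep.indepFun_finset {0} {1,2,3} (by decide)
    (fun i => measurable_of_countable _)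
  have h2 := h.comp
    (φ := fun x : ({0} : Finset (Fin 7)) → Fin 2 =>
      if x ⟨0, by decide⟩ = 1 then (1:ℝ) else 0)
    (ψ := fun x : ({1,2,3} : Finset (Fin 7)) → Fin 2 =>
      ((if x ⟨1, by decide⟩ = 1 then (1:ℝ) else 0),
       (if x ⟨1, by decide⟩ = 1 then (if x ⟨2, by decide⟩ = 1 then (1:ℝ) else 0)
        else (if x ⟨3, by decide⟩ = 1 then (1:ℝ) else 0))))
    (measurable_of_countable _) (measurable_of_countable _)
  exact h2

lemma indepDMY : IndepFun (fun ω => (D ω, M 0 ω, M 1 ω))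
    (fun ω => (Y 0 0 ω, Y 0 1 ω, Y 1 0 ω, Y 1 1 ω)) μ := by
  have h := hIndep.indepFun_finset {0,1,2,3} {4,5} (by decide)
    (fun i => measurable_of_countable _)
  have h2 := h.comp
    (φ := fun x : ({0,1,2,3} : Finset (Fin 7)) → Fin 2 =>
      ((if x ⟨0, by decide⟩ = 1 then (1:ℝ) else 0),
       (if x ⟨1, by decide⟩ = 1 then (1:ℝ) else 0),
       (if x ⟨1, by decide⟩ = 1 then (if x ⟨2, by decide⟩ = 1 then (1:ℝ) else 0)
        else (if x ⟨3, by decide⟩ = 1 then (1:ℝ) else 0))))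
    (ψ := fun x : ({4,5} : Finset (Fin 7)) → Fin 2 =>
      ((0:ℝ), (if x ⟨4, by decide⟩ = 1 then (1:ℝ) else 0), (0:ℝ),
        (if x ⟨5, by decide⟩ = 1 then (1:ℝ) else 0)))
    (measurable_of_countable _) (measurable_of_countable _)
  exact h2

end

end Stmt10

open Stmt10 in
/-- There exists a joint distribution of binary (D, M(0), M(1), Y(d,m))
satisfying mutual independence and mandatory reporting with β_M > 0 and β_Y > 0 but
ATE_{M=1} < 0.  Concretely, with β_M = β_Y = 0.01, P(S=al)=0.1, P(S=ma)=0.05,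
E[Y(0,1)]=0.1, P(D=1)=0.01, the weighted-average formula gives
w·θ = −0.003884 and ATE_{M=1} = (w·θ)/(w·1) < 0. -/
theorem stmt10 :
    (∃ (μ : Measure (Fin 7 → Fin 2)) (_ : IsProbabilityMeasure μ)
      (D : (Fin 7 → Fin 2) → ℝ) (M : Fin 2 → (Fin 7 → Fin 2) → ℝ)
      (Y : Fin 2 → Fin 2 → (Fin 7 → Fin 2) → ℝ),
      Measurable D ∧ (∀ d, Measurable (M d)) ∧ (∀ d m, Measurable (Y d m))
      ∧ (∀ ω, D ω = 0 ∨ D ω = 1)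
      ∧ (∀ d ω, M d ω = 0 ∨ M d ω = 1)
      ∧ (∀ d m ω, Y d m ω = 0 ∨ Y d m ω = 1)
      ∧ IndepFun D (fun ω => (M 0 ω, M 1 ω)) μ
      ∧ IndepFun (fun ω => (D ω, M 0 ω, M 1 ω))
          (fun ω => (Y 0 0 ω, Y 0 1 ω, Y 1 0 ω, Y 1 1 ω)) μ
      ∧ (∀ d : Fin 2, ∀ᵐ ω ∂μ, Y d 0 ω = 0)
      ∧ (∫ ω, M 1 ω ∂μ) - (∫ ω, M 0 ω ∂μ) = 0.01
      ∧ (∫ ω, Y 1 1 ω ∂μ) - (∫ ω, Y 0 1 ω ∂μ) = 0.01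
      ∧ (μ {ω | M 0 ω = 1 ∧ M 1 ω = 1}).toReal = 0.1
      ∧ (μ {ω | M 0 ω = 1 ∧ M 1 ω = 0}).toReal = 0.05
      ∧ (∫ ω, Y 0 1 ω ∂μ) = 0.1
      ∧ (μ {ω | D ω = 1}).toReal = 0.01
      ∧ 0 < (μ {ω | D ω * M 1 ω + (1 - D ω) * M 0 ω = 1}).toReal
      ∧ (∫ ω in {ω | D ω * M 1 ω + (1 - D ω) * M 0 ω = 1},
            (((1 - M 1 ω) * Y 1 0 ω + M 1 ω * Y 1 1 ω)
              - ((1 - M 0 ω) * Y 0 0 ω + M 0 ω * Y 0 1 ω)) ∂μ)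
          / (μ {ω | D ω * M 1 ω + (1 - D ω) * M 0 ω = 1}).toReal < 0)
    ∧ ((0.1 * 0.01 + (0.05 + 0.01) * 0.01 * (0.01 + 0.1)
          - 0.05 * (1 - 0.01) * 0.1 : ℝ) = -0.003884)
    ∧ ((0.1 * 0.01 + (0.05 + 0.01) * 0.01 * (0.01 + 0.1) - 0.05 * (1 - 0.01) * 0.1)
          / (0.1 + (0.05 + 0.01) * 0.01 + 0.05 * (1 - 0.01)) : ℝ) < 0 := by
  refine ⟨?_, by norm_num, by norm_num⟩
  refine ⟨Stmt10.μ, inferInstance, Stmt10.D, Stmt10.M, Stmt10.Y,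
    measurable_of_countable _, fun d => measurable_of_countable _,
    fun d m => measurable_of_countable _,
    fun ω => bcases 0 ω,
    ?_, ?_, indepDM, indepDMY,
    fun d => ae_of_all _ fun ω => by simp [Stmt10.Y],
    ?_, ?_, ?_, ?_, ?_, ?_, ?_, ?_⟩
  · intro d ω
    rcases f2 d with hd|hd <;> subst hd
    · simpa [Stmt10.M] using bcases 1 ω
    · rcases f2 (ω 1) with h1|h1 <;> simp [Stmt10.M, h1] <;>
        [skip; skip] <;> first | exact bcases 3 ω | exact bcases 2 ω
  · intro d m ω
    rcases f2 m with hm|hm <;> subst hm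
    · simp [Stmt10.Y]
    · rcases f2 d with hd|hd <;> subst hd <;> simp [Stmt10.Y] <;>
        first | exact bcases 4 ω | exact bcases 5 ω
  · rw [integral_ind _ _ hM1fun, integral_ind _ _ hM0fun,
      toReal_union disjA11B01, vA11, vB01, vAM0]
    norm_num
  · rw [integral_ind _ _ hY11fun, integral_ind _ _ hY01fun, vAY11, vAY01]
    norm_num
  · rw [hSetM, vA11]
  · rw [hSetM10, vA10]
  · rw [integral_ind _ _ hY01fun, vAY01]
  · rw [hSetD, vAD]
  · rw [hSetR, vR]; norm_num
  · rw [hSetR]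
    have hnum : (∫ ω in R,
        (((1 - Stmt10.M 1 ω) * Stmt10.Y 1 0 ω + Stmt10.M 1 ω * Stmt10.Y 1 1 ω)
          - ((1 - Stmt10.M 0 ω) * Stmt10.Y 0 0 ω
            + Stmt10.M 0 ω * Stmt10.Y 0 1 ω)) ∂Stmt10.μ) = -0.003884 := by
      rw [← integral_indicator (meas R)]
      have heq : (R.indicator fun ω =>
          (((1 - Stmt10.M 1 ω) * Stmt10.Y 1 0 ω + Stmt10.M 1 ω * Stmt10.Y 1 1 ω)
            - ((1 - Stmt10.M 0 ω) * Stmt10.Y 0 0 ω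
              + Stmt10.M 0 ω * Stmt10.Y 0 1 ω)))
          = fun ω => S1.indicator (fun _ => (1:ℝ)) ω
              - S2.indicator (fun _ => (1:ℝ)) ω := funext hIndicator
      rw [heq, integral_sub (.of_finite) (.of_finite),
        integral_indicator_const (1:ℝ) (meas S1),
        integral_indicator_const (1:ℝ) (meas S2), smul_eq_mul, smul_eq_mul,
        mul_one, mul_one, measureReal_def, measureReal_def, vS1, vS2]
      norm_num
    rw [hnum, vR]
    norm_num
end

section
/- There exists a joint distribution of binary (D, M(0), M(1), Y(d,m)) satisfying mutual independence and mandatory reporting with β_M < 0 and β_Y < 0 but ATT_{M=1} > 0. Concretely, with β_M=β_Y=−0.01, P(S=al)=0.1, P(S=ma)=0.05, E[Y(0,1)]=0.1, the formula gives ATT_{M=1} = 0.0026 > 0. -/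
open MeasureTheory ProbabilityTheory Set
open scoped ENNReal NNReal

noncomputable section Stmt11Aux


def bern (a b : ℝ) : Measure (Fin 2) :=
  ENNReal.ofReal a • Measure.dirac 0 + ENNReal.ofReal b • Measure.dirac 1

lemma bern_one (a b : ℝ) : bern a b {1} = ENNReal.ofReal b := by simp [bern, Measure.dirac_apply]
lemma bern_zero (a b : ℝ) : bern a b {0} = ENNReal.ofReal a := by simp [bern, Measure.dirac_apply]

lemma bern_prob (a b : ℝ) (ha : 0 ≤ a) (hb : 0 ≤ b) (h : a + b = 1) :
    IsProbabilityMeasure (bern a b) :=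
  ⟨by simp [bern, ← ENNReal.ofReal_add ha hb, h]⟩

instance ib1 : IsProbabilityMeasure (bern (1/2) (1/2)) :=
  bern_prob _ _ (by norm_num) (by norm_num) (by norm_num)
instance ib2 : IsProbabilityMeasure (bern (17/20) (3/20)) :=
  bern_prob _ _ (by norm_num) (by norm_num) (by norm_num)
instance ib3 : IsProbabilityMeasure (bern (1/3) (2/3)) :=
  bern_prob _ _ (by norm_num) (by norm_num) (by norm_num)
instance ib4 : IsProbabilityMeasure (bern (81/85) (4/85)) :=
  bern_prob _ _ (by norm_num) (by norm_num) (by norm_num)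
instance ib5 : IsProbabilityMeasure (bern (9/10) (1/10)) :=
  bern_prob _ _ (by norm_num) (by norm_num) (by norm_num)
instance ib6 : IsProbabilityMeasure (bern (91/100) (9/100)) :=
  bern_prob _ _ (by norm_num) (by norm_num) (by norm_num)

lemma bu (a b : ℝ) [IsProbabilityMeasure (bern a b)] : bern a b univ = 1 := measure_univ

def bv : Fin 7 → Measure (Fin 2) :=
  ![bern (1/2) (1/2), bern (17/20) (3/20), bern (1/3) (2/3), bern (81/85) (4/85),
    bern (9/10) (1/10), bern (91/100) (9/100), bern (1/2) (1/2)]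

instance bvprob : ∀ i, IsProbabilityMeasure (bv i) := by
  intro i; fin_cases i <;> · show IsProbabilityMeasure (bern _ _); infer_instance

def μX : Measure (Fin 7 → Fin 2) := Measure.pi bv

instance : IsProbabilityMeasure μX := by unfold μX; infer_instance

lemma μX_box (s0 s1 s2 s3 s4 s5 s6 : Set (Fin 2)) :
    μX (univ.pi ![s0, s1, s2, s3, s4, s5, s6]) =
      bern (1/2) (1/2) s0 * bern (17/20) (3/20) s1 * bern (1/3) (2/3) s2 *
      bern (81/85) (4/85) s3 * bern (9/10) (1/10) s4 * bern (91/100) (9/100) s5 *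
      bern (1/2) (1/2) s6 := by
  rw [μX, Measure.pi_pi, Fin.prod_univ_seven]; rfl

lemma mem7 {s0 s1 s2 s3 s4 s5 s6 : Set (Fin 2)} {ω : Fin 7 → Fin 2} :
    ω ∈ univ.pi ![s0, s1, s2, s3, s4, s5, s6] ↔
      ω 0 ∈ s0 ∧ ω 1 ∈ s1 ∧ ω 2 ∈ s2 ∧ ω 3 ∈ s3 ∧ ω 4 ∈ s4 ∧ ω 5 ∈ s5 ∧ ω 6 ∈ s6 := by
  constructor
  · intro h
    exact ⟨h 0 (mem_univ _), h 1 (mem_univ _), h 2 (mem_univ _), h 3 (mem_univ _),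
      h 4 (mem_univ _), h 5 (mem_univ _), h 6 (mem_univ _)⟩
  · rintro ⟨h0, h1, h2, h3, h4, h5, h6⟩ i -
    fin_cases i <;> assumption

lemma mem7' {s0 s1 s2 s3 s4 s5 s6 : Set (Fin 2)} {ω : Fin 7 → Fin 2} :
    (∀ i : Fin 7, ω i ∈ ![s0, s1, s2, s3, s4, s5, s6] i) ↔
      (ω 0 ∈ s0 ∧ ω 1 ∈ s1 ∧ ω 2 ∈ s2 ∧ ω 3 ∈ s3 ∧ ω 4 ∈ s4 ∧ ω 5 ∈ s5 ∧ ω 6 ∈ s6) := by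
  constructor
  · intro h; exact ⟨h 0, h 1, h 2, h 3, h 4, h 5, h 6⟩
  · rintro ⟨h0, h1, h2, h3, h4, h5, h6⟩ i
    fin_cases i <;> assumption

lemma f2 (x : Fin 2) : x = 0 ∨ x = 1 := by omega
lemma d01 : ¬((0 : Fin 2) = 1) := by decide
lemma d10 : ¬((1 : Fin 2) = 0) := by decide

@[simp] lemma ofrA : (ENNReal.ofReal (1/2 : ℝ)).toReal = 1/2 :=
  ENNReal.toReal_ofReal (by norm_num)
@[simp] lemma ofrB : (ENNReal.ofReal (3/20 : ℝ)).toReal = 3/20 :=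
  ENNReal.toReal_ofReal (by norm_num)
@[simp] lemma ofrC : (ENNReal.ofReal (17/20 : ℝ)).toReal = 17/20 :=
  ENNReal.toReal_ofReal (by norm_num)
@[simp] lemma ofrD : (ENNReal.ofReal (2/3 : ℝ)).toReal = 2/3 :=
  ENNReal.toReal_ofReal (by norm_num)
@[simp] lemma ofrE : (ENNReal.ofReal (1/3 : ℝ)).toReal = 1/3 :=
  ENNReal.toReal_ofReal (by norm_num)
@[simp] lemma ofrF : (ENNReal.ofReal (4/85 : ℝ)).toReal = 4/85 :=
  ENNReal.toReal_ofReal (by norm_num)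
@[simp] lemma ofrG : (ENNReal.ofReal (1/10 : ℝ)).toReal = 1/10 :=
  ENNReal.toReal_ofReal (by norm_num)
@[simp] lemma ofrH : (ENNReal.ofReal (9/100 : ℝ)).toReal = 9/100 :=
  ENNReal.toReal_ofReal (by norm_num)

def Dv (ω : Fin 7 → Fin 2) : ℝ := (ω 0).val
def M0 (ω : Fin 7 → Fin 2) : ℝ := (ω 1).val
def M1 (ω : Fin 7 → Fin 2) : ℝ :=
  ((ω 1).val : ℝ) * ((ω 2).val : ℝ) + (1 - ((ω 1).val : ℝ)) * ((ω 3).val : ℝ)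
def Mv : Fin 2 → (Fin 7 → Fin 2) → ℝ := ![M0, M1]
def Y01 (ω : Fin 7 → Fin 2) : ℝ := (ω 4).val
def Y11 (ω : Fin 7 → Fin 2) : ℝ := (ω 5).val
def Yv : Fin 2 → Fin 2 → (Fin 7 → Fin 2) → ℝ := ![![fun _ => 0, Y01], ![fun _ => 0, Y11]]

lemma Mv0 : Mv 0 = M0 := rfl
lemma Mv1 : Mv 1 = M1 := rfl
lemma Yv00 : Yv 0 0 = fun _ => (0:ℝ) := rfl
lemma Yv01 : Yv 0 1 = Y01 := rfl
lemma Yv10 : Yv 1 0 = fun _ => (0:ℝ) := rfl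
lemma Yv11 : Yv 1 1 = Y11 := rfl

-- abbreviations for boxes
def P1 : Set (Fin 7 → Fin 2) := univ.pi ![univ, {1}, univ, univ, univ, univ, univ]
def P2 : Set (Fin 7 → Fin 2) := univ.pi ![univ, {1}, {1}, univ, univ, univ, univ]
def P3 : Set (Fin 7 → Fin 2) := univ.pi ![univ, {1}, {0}, univ, univ, univ, univ]
def P4 : Set (Fin 7 → Fin 2) := univ.pi ![univ, {0}, univ, {1}, univ, univ, univ]
def P5 : Set (Fin 7 → Fin 2) := univ.pi ![univ, univ, univ, univ, {1}, univ, univ]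
def P6 : Set (Fin 7 → Fin 2) := univ.pi ![univ, univ, univ, univ, univ, {1}, univ]
def Q1 : Set (Fin 7 → Fin 2) := univ.pi ![{1}, {1}, {1}, univ, univ, univ, univ]
def Q2 : Set (Fin 7 → Fin 2) := univ.pi ![{1}, {0}, univ, {1}, univ, univ, univ]
def B1 : Set (Fin 7 → Fin 2) := univ.pi ![{1}, {1}, {1}, univ, univ, {1}, univ]
def B2 : Set (Fin 7 → Fin 2) := univ.pi ![{1}, {0}, univ, {1}, univ, {1}, univ]
def B3 : Set (Fin 7 → Fin 2) := univ.pi ![{1}, {1}, {1}, univ, {1}, univ, univ]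

lemma mP1 : (μX P1).toReal = 3/20 := by
  rw [P1, μX_box]; simp only [bern_one, bu, one_mul, mul_one, ENNReal.toReal_mul, ofrA, ofrB, ofrC, ofrD, ofrE, ofrF, ofrG, ofrH]
lemma mP2 : (μX P2).toReal = 1/10 := by
  rw [P2, μX_box]; simp only [bern_one, bu, one_mul, mul_one, ENNReal.toReal_mul, ofrA, ofrB, ofrC, ofrD, ofrE, ofrF, ofrG, ofrH]; norm_num
lemma mP3 : (μX P3).toReal = 1/20 := by
  rw [P3, μX_box]; simp only [bern_one, bern_zero, bu, one_mul, mul_one, ENNReal.toReal_mul, ofrA, ofrB, ofrC, ofrD, ofrE, ofrF, ofrG, ofrH]; norm_num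
lemma mP4 : (μX P4).toReal = 1/25 := by
  rw [P4, μX_box]; simp only [bern_one, bern_zero, bu, one_mul, mul_one, ENNReal.toReal_mul, ofrA, ofrB, ofrC, ofrD, ofrE, ofrF, ofrG, ofrH]; norm_num
lemma mP5 : (μX P5).toReal = 1/10 := by
  rw [P5, μX_box]; simp only [bern_one, bu, one_mul, mul_one, ENNReal.toReal_mul, ofrA, ofrB, ofrC, ofrD, ofrE, ofrF, ofrG, ofrH]
lemma mP6 : (μX P6).toReal = 9/100 := by
  rw [P6, μX_box]; simp only [bern_one, bu, one_mul, mul_one, ENNReal.toReal_mul, ofrA, ofrB, ofrC, ofrD, ofrE, ofrF, ofrG, ofrH]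
lemma mQ1 : (μX Q1).toReal = 1/20 := by
  rw [Q1, μX_box]; simp only [bern_one, bu, one_mul, mul_one, ENNReal.toReal_mul, ofrA, ofrB, ofrC, ofrD, ofrE, ofrF, ofrG, ofrH]; norm_num
lemma mQ2 : (μX Q2).toReal = 1/50 := by
  rw [Q2, μX_box]; simp only [bern_one, bern_zero, bu, one_mul, mul_one, ENNReal.toReal_mul, ofrA, ofrB, ofrC, ofrD, ofrE, ofrF, ofrG, ofrH]; norm_num
lemma mB1 : (μX B1).toReal = 9/2000 := by
  rw [B1, μX_box]; simp only [bern_one, bu, one_mul, mul_one, ENNReal.toReal_mul, ofrA, ofrB, ofrC, ofrD, ofrE, ofrF, ofrG, ofrH]; norm_num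
lemma mB2 : (μX B2).toReal = 9/5000 := by
  rw [B2, μX_box]; simp only [bern_one, bern_zero, bu, one_mul, mul_one, ENNReal.toReal_mul, ofrA, ofrB, ofrC, ofrD, ofrE, ofrF, ofrG, ofrH]; norm_num
lemma mB3 : (μX B3).toReal = 1/200 := by
  rw [B3, μX_box]; simp only [bern_one, bu, one_mul, mul_one, ENNReal.toReal_mul, ofrA, ofrB, ofrC, ofrD, ofrE, ofrF, ofrG, ofrH]; norm_num

lemma intM0 : ∫ ω, M0 ω ∂μX = 3/20 := by
  classical
  have h : M0 = P1.indicator 1 := by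
    funext ω
    rcases f2 (ω 1) with h|h <;>
      simp [M0, P1, Set.indicator_apply, mem7', h, d01, d10]
  rw [show (fun ω => M0 ω) = M0 from rfl, h,
    integral_indicator_one MeasurableSet.of_discrete, measureReal_def, mP1]

lemma intM1 : ∫ ω, M1 ω ∂μX = 7/50 := by
  classical
  have h : M1 = fun ω => P2.indicator 1 ω + P4.indicator 1 ω := by
    funext ω
    rcases f2 (ω 1) with h1|h1 <;> rcases f2 (ω 2) with h2|h2 <;> rcases f2 (ω 3) with h3|h3 <;>
      simp [M1, P2, P4, Set.indicator_apply, mem7', h1, h2, h3, d01, d10]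
  rw [show (fun ω => M1 ω) = M1 from rfl, h,
    integral_add (Integrable.of_finite) (Integrable.of_finite),
    integral_indicator_one MeasurableSet.of_discrete,
    integral_indicator_one MeasurableSet.of_discrete, measureReal_def, mP2, measureReal_def, mP4]
  norm_num

lemma intY01 : ∫ ω, Y01 ω ∂μX = 1/10 := by
  classical
  have h : Y01 = P5.indicator 1 := by
    funext ω
    rcases f2 (ω 4) with h|h <;>
      simp [Y01, P5, Set.indicator_apply, mem7', h, d01, d10]
  rw [show (fun ω => Y01 ω) = Y01 from rfl, h,
    integral_indicator_one MeasurableSet.of_discrete, measureReal_def, mP5]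

lemma intY11 : ∫ ω, Y11 ω ∂μX = 9/100 := by
  classical
  have h : Y11 = P6.indicator 1 := by
    funext ω
    rcases f2 (ω 5) with h|h <;>
      simp [Y11, P6, Set.indicator_apply, mem7', h, d01, d10]
  rw [show (fun ω => Y11 ω) = Y11 from rfl, h,
    integral_indicator_one MeasurableSet.of_discrete, measureReal_def, mP6]

lemma hE1 : {ω : Fin 7 → Fin 2 | Mv 0 ω = 1 ∧ Mv 1 ω = 1} = P2 := by
  ext ω
  simp only [mem_setOf_eq, Mv0, Mv1, P2, mem_univ_pi, mem7']
  rcases f2 (ω 1) with h1|h1 <;> rcases f2 (ω 2) with h2|h2 <;> rcases f2 (ω 3) with h3|h3 <;>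
    simp [M0, M1, h1, h2, h3, d01, d10]

lemma hE2 : {ω : Fin 7 → Fin 2 | Mv 0 ω = 1 ∧ Mv 1 ω = 0} = P3 := by
  ext ω
  simp only [mem_setOf_eq, Mv0, Mv1, P3, mem_univ_pi, mem7']
  rcases f2 (ω 1) with h1|h1 <;> rcases f2 (ω 2) with h2|h2 <;> rcases f2 (ω 3) with h3|h3 <;>
    simp [M0, M1, h1, h2, h3, d01, d10]

lemma hS : {ω : Fin 7 → Fin 2 | Dv ω = 1 ∧ Dv ω * Mv 1 ω + (1 - Dv ω) * Mv 0 ω = 1}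
    = Q1 ∪ Q2 := by
  ext ω
  simp only [mem_setOf_eq, Mv0, Mv1, Q1, Q2, mem_union, mem_univ_pi, mem7']
  rcases f2 (ω 0) with h0|h0 <;> rcases f2 (ω 1) with h1|h1 <;> rcases f2 (ω 2) with h2|h2 <;>
    rcases f2 (ω 3) with h3|h3 <;>
    simp [Dv, M0, M1, h0, h1, h2, h3, d01, d10]

lemma hdisjQ : Disjoint Q1 Q2 := by
  rw [Set.disjoint_left]
  intro ω h1 h2
  rw [Q1, mem7] at h1
  rw [Q2, mem7] at h2
  have a1 : ω 1 ∈ ({1} : Set (Fin 2)) := h1.2.1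
  have a2 : ω 1 ∈ ({0} : Set (Fin 2)) := h2.2.1
  rw [mem_singleton_iff] at a1 a2
  omega

lemma mS : (μX (Q1 ∪ Q2)).toReal = 7/100 := by
  rw [measure_union hdisjQ MeasurableSet.of_discrete,
    ENNReal.toReal_add (measure_ne_top _ _) (measure_ne_top _ _), mQ1, mQ2]
  norm_num

lemma memQ1 {ω : Fin 7 → Fin 2} : ω ∈ Q1 ↔ (ω 0 = 1 ∧ ω 1 = 1 ∧ ω 2 = 1) := by
  rw [Q1, mem7]; simp
lemma memQ2 {ω : Fin 7 → Fin 2} : ω ∈ Q2 ↔ (ω 0 = 1 ∧ ω 1 = 0 ∧ ω 3 = 1) := by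
  rw [Q2, mem7]; simp
lemma memB1 {ω : Fin 7 → Fin 2} : ω ∈ B1 ↔ (ω 0 = 1 ∧ ω 1 = 1 ∧ ω 2 = 1 ∧ ω 5 = 1) := by
  rw [B1, mem7]; simp
lemma memB2 {ω : Fin 7 → Fin 2} : ω ∈ B2 ↔ (ω 0 = 1 ∧ ω 1 = 0 ∧ ω 3 = 1 ∧ ω 5 = 1) := by
  rw [B2, mem7]; simp
lemma memB3 {ω : Fin 7 → Fin 2} : ω ∈ B3 ↔ (ω 0 = 1 ∧ ω 1 = 1 ∧ ω 2 = 1 ∧ ω 4 = 1) := by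
  rw [B3, mem7]; simp

set_option maxHeartbeats 2000000 in
lemma hIndic :
    (Q1 ∪ Q2).indicator
      (fun ω => ((1 - Mv 1 ω) * Yv 1 0 ω + Mv 1 ω * Yv 1 1 ω)
        - ((1 - Mv 0 ω) * Yv 0 0 ω + Mv 0 ω * Yv 0 1 ω))
    = fun ω => B1.indicator 1 ω + B2.indicator 1 ω - B3.indicator 1 ω := by
  classical
  funext ω
  rcases f2 (ω 0) with h0|h0 <;> rcases f2 (ω 1) with h1|h1 <;> rcases f2 (ω 2) with h2|h2 <;>
    rcases f2 (ω 3) with h3|h3 <;> rcases f2 (ω 4) with h4|h4 <;> rcases f2 (ω 5) with h5|h5 <;>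
    simp only [Set.indicator_apply, Set.mem_union, memQ1, memQ2, memB1, memB2, memB3,
      Mv0, Mv1, Yv00, Yv01, Yv10, Yv11, M0, M1, Y01, Y11,
      h0, h1, h2, h3, h4, h5] <;>
    norm_num

lemma intBig :
    ∫ ω in (Q1 ∪ Q2),
      (((1 - Mv 1 ω) * Yv 1 0 ω + Mv 1 ω * Yv 1 1 ω)
        - ((1 - Mv 0 ω) * Yv 0 0 ω + Mv 0 ω * Yv 0 1 ω)) ∂μX = 13/10000 := by
  rw [← integral_indicator MeasurableSet.of_discrete]
  simp only [hIndic]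
  rw [integral_sub Integrable.of_finite Integrable.of_finite,
    integral_add Integrable.of_finite Integrable.of_finite,
    integral_indicator_one MeasurableSet.of_discrete,
    integral_indicator_one MeasurableSet.of_discrete,
    integral_indicator_one MeasurableSet.of_discrete, measureReal_def, mB1, measureReal_def, mB2, measureReal_def, mB3]
  norm_num


lemma indep_transport {Ω Ω' β γ : Type*} [MeasurableSpace Ω] [MeasurableSpace Ω']
    [MeasurableSpace β] [MeasurableSpace γ] {μ : Measure Ω} {ν : Measure Ω'} {e : Ω → Ω'}
    (he : MeasurePreserving e μ ν) {f : Ω' → β} {g : Ω' → γ}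
    (hf : Measurable f) (hg : Measurable g) (h : IndepFun f g ν) :
    IndepFun (f ∘ e) (g ∘ e) μ := by
  rw [indepFun_iff_measure_inter_preimage_eq_mul] at h ⊢
  intro s t hs ht
  have h1 : (f ∘ e) ⁻¹' s = e ⁻¹' (f ⁻¹' s) := rfl
  have h2 : (g ∘ e) ⁻¹' t = e ⁻¹' (g ⁻¹' t) := rfl
  rw [h1, h2, ← Set.preimage_inter,
    he.measure_preimage ((hf hs).inter (hg ht)).nullMeasurableSet,
    he.measure_preimage (hf hs).nullMeasurableSet,
    he.measure_preimage (hg ht).nullMeasurableSet]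
  exact h s t hs ht

lemma indepFun_fst_snd' {α β : Type*} [MeasurableSpace α] [MeasurableSpace β]
    (μ : Measure α) (ν : Measure β) [IsProbabilityMeasure μ] [IsProbabilityMeasure ν] :
    IndepFun (Prod.fst : α × β → α) (Prod.snd : α × β → β) (μ.prod ν) := by
  rw [indepFun_iff_measure_inter_preimage_eq_mul]
  intro s t hs ht
  have h1 : (Prod.fst : α × β → α) ⁻¹' s ∩ Prod.snd ⁻¹' t = s ×ˢ t := (Set.prod_eq s t).symm
  have h2 : (Prod.fst : α × β → α) ⁻¹' s = s ×ˢ (univ : Set β) := by ext x; simp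
  have h3 : (Prod.snd : α × β → β) ⁻¹' t = (univ : Set α) ×ˢ t := by ext x; simp
  rw [h1, h2, h3, Measure.prod_prod, Measure.prod_prod]
  simp [mul_comm, mul_assoc, mul_left_comm]

lemma indep1 : IndepFun Dv (fun ω => (Mv 0 ω, Mv 1 ω)) μX := by
  classical
  let p : Fin 7 → Prop := fun i => i = 0
  let e := MeasurableEquiv.piEquivPiSubtypeProd (fun _ : Fin 7 => Fin 2) p
  have he : MeasurePreserving (⇑e) (Measure.pi bv)
      ((Measure.pi fun i : Subtype p => bv i).prod
        (Measure.pi fun i : {i // ¬ p i} => bv i)) :=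
    measurePreserving_piEquivPiSubtypeProd bv p
  let φ : ({i : Fin 7 // p i} → Fin 2) → ℝ := fun y => ((y ⟨0, rfl⟩).val : ℝ)
  let ψ : ({i : Fin 7 // ¬ p i} → Fin 2) → ℝ × ℝ := fun y =>
    (((y ⟨1, by decide⟩).val : ℝ),
      ((y ⟨1, by decide⟩).val : ℝ) * ((y ⟨2, by decide⟩).val : ℝ)
        + (1 - ((y ⟨1, by decide⟩).val : ℝ)) * ((y ⟨3, by decide⟩).val : ℝ))
  exact indep_transport he (measurable_of_countable (φ ∘ Prod.fst))
    (measurable_of_countable (ψ ∘ Prod.snd))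
    ((indepFun_fst_snd' _ _).comp (measurable_of_countable φ) (measurable_of_countable ψ))

lemma indep2 : IndepFun (fun ω => (Dv ω, Mv 0 ω, Mv 1 ω))
    (fun ω => (Yv 0 0 ω, Yv 0 1 ω, Yv 1 0 ω, Yv 1 1 ω)) μX := by
  classical
  let p : Fin 7 → Prop := fun i => i.val ≤ 3
  let e := MeasurableEquiv.piEquivPiSubtypeProd (fun _ : Fin 7 => Fin 2) p
  have he : MeasurePreserving (⇑e) (Measure.pi bv)
      ((Measure.pi fun i : Subtype p => bv i).prod
        (Measure.pi fun i : {i // ¬ p i} => bv i)) :=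
    measurePreserving_piEquivPiSubtypeProd bv p
  let φ : ({i : Fin 7 // p i} → Fin 2) → ℝ × ℝ × ℝ := fun y =>
    (((y ⟨0, by decide⟩).val : ℝ), ((y ⟨1, by decide⟩).val : ℝ),
      ((y ⟨1, by decide⟩).val : ℝ) * ((y ⟨2, by decide⟩).val : ℝ)
        + (1 - ((y ⟨1, by decide⟩).val : ℝ)) * ((y ⟨3, by decide⟩).val : ℝ))
  let ψ : ({i : Fin 7 // ¬ p i} → Fin 2) → ℝ × ℝ × ℝ × ℝ := fun y =>
    ((0 : ℝ), ((y ⟨4, by decide⟩).val : ℝ), (0 : ℝ), ((y ⟨5, by decide⟩).val : ℝ))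
  exact indep_transport he (measurable_of_countable (φ ∘ Prod.fst))
    (measurable_of_countable (ψ ∘ Prod.snd))
    ((indepFun_fst_snd' _ _).comp (measurable_of_countable φ) (measurable_of_countable ψ))

end Stmt11Aux

/-- There exists a joint distribution of binary (D, M(0), M(1), Y(d,m))
satisfying mutual independence and mandatory reporting with β_M < 0 and β_Y < 0 but
ATT_{M=1} > 0.  Concretely, with β_M = β_Y = −0.01, P(S=al)=0.1, P(S=ma)=0.05,
E[Y(0,1)]=0.1, the weighted-average formula gives w·θ = 0.0026 and
ATT_{M=1} = (w·θ)/(w·1) > 0. -/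
theorem stmt11 :
    (∃ (μ : Measure (Fin 7 → Fin 2)) (_ : IsProbabilityMeasure μ)
      (D : (Fin 7 → Fin 2) → ℝ) (M : Fin 2 → (Fin 7 → Fin 2) → ℝ)
      (Y : Fin 2 → Fin 2 → (Fin 7 → Fin 2) → ℝ),
      Measurable D ∧ (∀ d, Measurable (M d)) ∧ (∀ d m, Measurable (Y d m))
      ∧ (∀ ω, D ω = 0 ∨ D ω = 1)
      ∧ (∀ d ω, M d ω = 0 ∨ M d ω = 1)
      ∧ (∀ d m ω, Y d m ω = 0 ∨ Y d m ω = 1)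
      ∧ IndepFun D (fun ω => (M 0 ω, M 1 ω)) μ
      ∧ IndepFun (fun ω => (D ω, M 0 ω, M 1 ω))
          (fun ω => (Y 0 0 ω, Y 0 1 ω, Y 1 0 ω, Y 1 1 ω)) μ
      ∧ (∀ d : Fin 2, ∀ᵐ ω ∂μ, Y d 0 ω = 0)
      ∧ (∫ ω, M 1 ω ∂μ) - (∫ ω, M 0 ω ∂μ) = -0.01
      ∧ (∫ ω, Y 1 1 ω ∂μ) - (∫ ω, Y 0 1 ω ∂μ) = -0.01
      ∧ (μ {ω | M 0 ω = 1 ∧ M 1 ω = 1}).toReal = 0.1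
      ∧ (μ {ω | M 0 ω = 1 ∧ M 1 ω = 0}).toReal = 0.05
      ∧ (∫ ω, Y 0 1 ω ∂μ) = 0.1
      ∧ 0 < (μ {ω | D ω = 1 ∧ D ω * M 1 ω + (1 - D ω) * M 0 ω = 1}).toReal
      ∧ 0 < (∫ ω in {ω | D ω = 1 ∧ D ω * M 1 ω + (1 - D ω) * M 0 ω = 1},
            (((1 - M 1 ω) * Y 1 0 ω + M 1 ω * Y 1 1 ω)
              - ((1 - M 0 ω) * Y 0 0 ω + M 0 ω * Y 0 1 ω)) ∂μ)
          / (μ {ω | D ω = 1 ∧ D ω * M 1 ω + (1 - D ω) * M 0 ω = 1}).toReal)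
    ∧ ((0.1 * (-0.01) + (0.05 + (-0.01)) * ((-0.01) + 0.1) : ℝ) = 0.0026)
    ∧ (0 < ((0.1 * (-0.01) + (0.05 + (-0.01)) * ((-0.01) + 0.1))
          / (0.1 + 0.05 + (-0.01)) : ℝ)) := by
  refine ⟨⟨μX, inferInstance, Dv, Mv, Yv, ?_, ?_, ?_, ?_, ?_, ?_, ?_, ?_, ?_, ?_, ?_, ?_, ?_,
    ?_, ?_, ?_⟩, by norm_num, by norm_num⟩
  · exact measurable_of_countable _
  · exact fun d => measurable_of_countable _
  · exact fun d m => measurable_of_countable _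
  · intro ω; rcases f2 (ω 0) with h|h <;> simp [Dv, h]
  · intro d ω
    fin_cases d
    · rcases f2 (ω 1) with h|h <;> simp [Mv, M0, h]
    · rcases f2 (ω 1) with h1|h1 <;> rcases f2 (ω 2) with h2|h2 <;>
        rcases f2 (ω 3) with h3|h3 <;> simp [Mv, M1, h1, h2, h3]
  · intro d m ω
    fin_cases d <;> fin_cases m
    · exact Or.inl rfl
    · rcases f2 (ω 4) with h|h <;> simp [Yv, Y01, h]
    · exact Or.inl rfl
    · rcases f2 (ω 5) with h|h <;> simp [Yv, Y11, h]
  · exact indep1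
  · exact indep2
  · intro d
    refine ae_of_all _ (fun ω => ?_)
    fin_cases d <;> rfl
  · simp only [Mv0, Mv1]; rw [intM1, intM0]; norm_num
  · simp only [Yv01, Yv11]; rw [intY11, intY01]; norm_num
  · rw [hE1, mP2]; norm_num
  · rw [hE2, mP3]; norm_num
  · simp only [Yv01]; rw [intY01]; norm_num
  · rw [hS, mS]; norm_num
  · rw [hS, intBig, mS]; norm_num
end

section
/- Under treatment ignorability (D independent of (Y(d,1), M(d)) jointly, for each d), independence of D and M(d), mandatory reporting Y(d,0)=0 a.s., and consistency, the identification formula E[Y(d)] = E[Y | M=1, D=d] · P(M=1 | D=d) holds for d=0,1, provided P(M=1, D=d)>0. -/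
open MeasureTheory ProbabilityTheory

/-- Under treatment ignorability D ⟂ (M(d), Y(d,1)) for each d,
mandatory reporting Y(d,0)=0 a.s., and consistency (M = M(D), Y = Y(D,M) written
as mixtures), the identification formula
E[Y(d)] = E[Y | M=1, D=d] · P(M=1 | D=d) holds for d = 0,1,
provided P(M=1, D=d) > 0 (and P(D=d) > 0). -/
theorem stmt15 {Ω : Type*} [MeasurableSpace Ω] (μ : Measure Ω) [IsProbabilityMeasure μ]
    (D : Ω → ℝ) (M : Fin 2 → Ω → ℝ) (Y : Fin 2 → Fin 2 → Ω → ℝ)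
    (hDm : Measurable D) (hMm : ∀ d, Measurable (M d)) (hYm : ∀ d m, Measurable (Y d m))
    (hDb : ∀ ω, D ω = 0 ∨ D ω = 1)
    (hMb : ∀ d ω, M d ω = 0 ∨ M d ω = 1)
    (hYb : ∀ d m ω, Y d m ω = 0 ∨ Y d m ω = 1)
    (hignore : ∀ d : Fin 2, IndepFun D (fun ω => (M d ω, Y d 1 ω)) μ)
    (hmand : ∀ d : Fin 2, ∀ᵐ ω ∂μ, Y d 0 ω = 0)
    (hDpos : ∀ d : Fin 2, 0 < (μ {ω | D ω = ((d : ℕ) : ℝ)}).toReal)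
    (hpos : ∀ d : Fin 2, 0 < (μ {ω | D ω * M 1 ω + (1 - D ω) * M 0 ω = 1
        ∧ D ω = ((d : ℕ) : ℝ)}).toReal) :
    ∀ d : Fin 2,
      ∫ ω, ((1 - M d ω) * Y d 0 ω + M d ω * Y d 1 ω) ∂μ
      = ((∫ ω in {ω | D ω * M 1 ω + (1 - D ω) * M 0 ω = 1 ∧ D ω = ((d : ℕ) : ℝ)},
            ((1 - D ω) * ((1 - M 0 ω) * Y 0 0 ω + M 0 ω * Y 0 1 ω)
              + D ω * ((1 - M 1 ω) * Y 1 0 ω + M 1 ω * Y 1 1 ω)) ∂μ)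
          / (μ {ω | D ω * M 1 ω + (1 - D ω) * M 0 ω = 1
              ∧ D ω = ((d : ℕ) : ℝ)}).toReal)
        * ((μ {ω | D ω * M 1 ω + (1 - D ω) * M 0 ω = 1
              ∧ D ω = ((d : ℕ) : ℝ)}).toReal
            / (μ {ω | D ω = ((d : ℕ) : ℝ)}).toReal) := by
  intro d
  -- notation
  set S : Set Ω := {ω | D ω * M 1 ω + (1 - D ω) * M 0 ω = 1 ∧ D ω = ((d : ℕ) : ℝ)} with hSdef
  set T : Set Ω := {ω | D ω = ((d : ℕ) : ℝ)} with hTdef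
  have hSmeas : MeasurableSet S := by
    have h1 : Measurable fun ω => D ω * M 1 ω + (1 - D ω) * M 0 ω := by
      exact ((hDm.mul (hMm 1)).add ((measurable_const.sub hDm).mul (hMm 0)))
    exact (h1 (measurableSet_singleton 1)).inter (hDm (measurableSet_singleton _))
  have hTmeas : MeasurableSet T := hDm (measurableSet_singleton _)
  -- on S : D ω = d and M d ω = 1
  have hSchar : ∀ ω ∈ S, D ω = ((d : ℕ) : ℝ) ∧ M d ω = 1 := by
    intro ω hω
    obtain ⟨h1, h2⟩ := hω
    refine ⟨h2, ?_⟩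
    fin_cases d <;> simp_all <;> linarith
  -- step: set integral equals ∫ Y d 1 over S
  have hstep1 : (∫ ω in S,
        ((1 - D ω) * ((1 - M 0 ω) * Y 0 0 ω + M 0 ω * Y 0 1 ω)
          + D ω * ((1 - M 1 ω) * Y 1 0 ω + M 1 ω * Y 1 1 ω)) ∂μ)
      = ∫ ω in S, Y d 1 ω ∂μ := by
    refine setIntegral_congr_fun hSmeas fun ω hω => ?_
    obtain ⟨hD, hM⟩ := hSchar ω hω
    fin_cases d <;> simp_all <;> ring
  -- pointwise indicator identity
  have hind : ∀ ω, S.indicator (Y d 1) ω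
      = (T.indicator (fun _ => (1:ℝ)) ω) * (M d ω * Y d 1 ω) := by
    intro ω
    by_cases hT : ω ∈ T
    · by_cases hM1 : M d ω = 1
      · have hS : ω ∈ S := by
          constructor
          · fin_cases d <;> simp_all
          · exact hT
        simp [Set.indicator_of_mem hS, Set.indicator_of_mem hT, hM1]
      · have hM0 : M d ω = 0 := (hMb d ω).resolve_right hM1
        have hS : ω ∉ S := by
          intro hS
          exact hM1 (hSchar ω hS).2
        simp [Set.indicator_of_notMem hS, hM0]
    · have hS : ω ∉ S := fun hS => hT (hSchar ω hS).1
      simp [Set.indicator_of_notMem hS, Set.indicator_of_notMem hT]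
  -- independence of 1_T and M d * Y d 1
  have hindep : IndepFun (T.indicator (fun _ => (1:ℝ)) : Ω → ℝ)
      (fun ω => M d ω * Y d 1 ω) μ := by
    have hφ : Measurable fun x : ℝ => if x = ((d : ℕ) : ℝ) then (1:ℝ) else 0 := by
      exact Measurable.ite (measurableSet_singleton _) measurable_const measurable_const
    have hψ : Measurable fun p : ℝ × ℝ => p.1 * p.2 := measurable_fst.mul measurable_snd
    have := (hignore d).comp hφ hψ
    convert this using 1
    · ext ω; simp [hTdef, Set.indicator_apply]
    · rfl
  have hbin : ∀ (f : Ω → ℝ), (∀ ω, f ω = 0 ∨ f ω = 1) → Measurable f → Integrable f μ := by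
    intro f hb hm
    refine Integrable.mono' (integrable_const (1:ℝ)) hm.aestronglyMeasurable ?_
    filter_upwards with ω
    rcases hb ω with h | h <;> simp [h]
  -- product formula
  have hprod : ∫ ω, (T.indicator (fun _ => (1:ℝ)) ω) * (M d ω * Y d 1 ω) ∂μ
      = (μ T).toReal * ∫ ω, M d ω * Y d 1 ω ∂μ := by
    rw [hindep.integral_fun_mul_eq_mul_integral ((measurable_one.indicator hTmeas).aestronglyMeasurable)
      ((hMm d).mul (hYm d 1)).aestronglyMeasurable]
    congr 1
    rw [integral_indicator_const (1:ℝ) hTmeas]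
    simp [Measure.real]
  -- LHS equals ∫ M d * Y d 1
  have hLHS : ∫ ω, ((1 - M d ω) * Y d 0 ω + M d ω * Y d 1 ω) ∂μ
      = ∫ ω, M d ω * Y d 1 ω ∂μ := by
    refine integral_congr_ae ?_
    filter_upwards [hmand d] with ω h0
    simp [h0]
  -- put the set integral together
  have hkey : (∫ ω in S,
        ((1 - D ω) * ((1 - M 0 ω) * Y 0 0 ω + M 0 ω * Y 0 1 ω)
          + D ω * ((1 - M 1 ω) * Y 1 0 ω + M 1 ω * Y 1 1 ω)) ∂μ)
      = (μ T).toReal * ∫ ω, M d ω * Y d 1 ω ∂μ := by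
    rw [hstep1, ← integral_indicator hSmeas, ← hprod]
    exact integral_congr_ae (Filter.Eventually.of_forall hind)
  rw [hLHS, hkey]
  have hB : (μ S).toReal ≠ 0 := ne_of_gt (hpos d)
  have hC : (μ T).toReal ≠ 0 := ne_of_gt (hDpos d)
  field_simp
end

section
/- If E[M(1)] ≥ E[M(0)] (stochastic mediator monotonicity) and D is independent of (M(0),M(1)), then the bias factor [P(D=1|M=1)/P(D=0|M=1)] / [P(D=1)/P(D=0)] is at least 1, so the naive risk ratio is a lower bound for the causal risk ratio whenever the causal risk ratio equals the naive risk ratio times the bias factor. -/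
open MeasureTheory ProbabilityTheory

/-- If E[M(1)] ≥ E[M(0)] (stochastic mediator monotonicity) and D is
independent of (M(0),M(1)), then the bias factor
[P(D=1|M=1)/P(D=0|M=1)] / [P(D=1)/P(D=0)] is at least 1 (here M = D·M(1)+(1−D)·M(0)),
and consequently the naive risk ratio is a lower bound for the causal risk ratio
whenever the causal risk ratio equals the naive risk ratio times the bias factor. -/
theorem stmt17 {Ω : Type*} [MeasurableSpace Ω] (μ : Measure Ω) [IsProbabilityMeasure μ]
    (D : Ω → ℝ) (M : Fin 2 → Ω → ℝ)
    (hDm : Measurable D) (hMm : ∀ d, Measurable (M d))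
    (hDb : ∀ ω, D ω = 0 ∨ D ω = 1)
    (hMb : ∀ d ω, M d ω = 0 ∨ M d ω = 1)
    (hindep : IndepFun D (fun ω => (M 0 ω, M 1 ω)) μ)
    (hmono : (∫ ω, M 0 ω ∂μ) ≤ ∫ ω, M 1 ω ∂μ)
    (hD1 : 0 < (μ {ω | D ω = 1}).toReal)
    (hD0 : 0 < (μ {ω | D ω = 0}).toReal)
    (hM1 : 0 < (μ {ω | D ω * M 1 ω + (1 - D ω) * M 0 ω = 1}).toReal)
    (hD0M1 : 0 < (μ {ω | D ω = 0 ∧ D ω * M 1 ω + (1 - D ω) * M 0 ω = 1}).toReal) :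
    1 ≤ (((μ {ω | D ω = 1 ∧ D ω * M 1 ω + (1 - D ω) * M 0 ω = 1}).toReal
            / (μ {ω | D ω * M 1 ω + (1 - D ω) * M 0 ω = 1}).toReal)
          / ((μ {ω | D ω = 0 ∧ D ω * M 1 ω + (1 - D ω) * M 0 ω = 1}).toReal
            / (μ {ω | D ω * M 1 ω + (1 - D ω) * M 0 ω = 1}).toReal))
        / ((μ {ω | D ω = 1}).toReal / (μ {ω | D ω = 0}).toReal)
    ∧ ∀ naive crr : ℝ, 0 ≤ naive →
        crr = naive * ((((μ {ω | D ω = 1 ∧ D ω * M 1 ω + (1 - D ω) * M 0 ω = 1}).toReal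
            / (μ {ω | D ω * M 1 ω + (1 - D ω) * M 0 ω = 1}).toReal)
          / ((μ {ω | D ω = 0 ∧ D ω * M 1 ω + (1 - D ω) * M 0 ω = 1}).toReal
            / (μ {ω | D ω * M 1 ω + (1 - D ω) * M 0 ω = 1}).toReal))
        / ((μ {ω | D ω = 1}).toReal / (μ {ω | D ω = 0}).toReal)) →
        naive ≤ crr := by
  -- integrals equal measures
  have hint : ∀ d, (∫ ω, M d ω ∂μ) = (μ {ω | M d ω = 1}).toReal := by
    intro d
    have h : (fun ω => M d ω) = Set.indicator {ω | M d ω = 1} (fun _ => (1:ℝ)) := by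
      ext ω; rcases hMb d ω with h | h <;> simp [Set.indicator_apply, h]
    have hs : MeasurableSet {ω | M d ω = 1} := (hMm d) (measurableSet_singleton 1)
    rw [h, integral_indicator_const _ hs]; simp; rfl
  -- set rewrites
  have hset1 : {ω | D ω = 1 ∧ D ω * M 1 ω + (1 - D ω) * M 0 ω = 1}
      = D ⁻¹' {1} ∩ (fun ω => (M 0 ω, M 1 ω)) ⁻¹' {p : ℝ × ℝ | p.2 = 1} := by
    ext ω
    simp only [Set.mem_setOf_eq, Set.mem_inter_iff, Set.mem_preimage,
      Set.mem_singleton_iff]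
    constructor
    · rintro ⟨h1, h2⟩; rw [h1] at h2; exact ⟨h1, by linarith⟩
    · rintro ⟨h1, h2⟩; refine ⟨h1, ?_⟩; rw [h1, h2]; ring
  have hset0 : {ω | D ω = 0 ∧ D ω * M 1 ω + (1 - D ω) * M 0 ω = 1}
      = D ⁻¹' {0} ∩ (fun ω => (M 0 ω, M 1 ω)) ⁻¹' {p : ℝ × ℝ | p.1 = 1} := by
    ext ω
    simp only [Set.mem_setOf_eq, Set.mem_inter_iff, Set.mem_preimage,
      Set.mem_singleton_iff]
    constructor
    · rintro ⟨h1, h2⟩; rw [h1] at h2; exact ⟨h1, by linarith⟩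
    · rintro ⟨h1, h2⟩; refine ⟨h1, ?_⟩; rw [h1, h2]; ring
  have hmz : MeasurableSet {p : ℝ × ℝ | p.2 = 1} :=
    measurable_snd (measurableSet_singleton (1:ℝ))
  have hmo : MeasurableSet {p : ℝ × ℝ | p.1 = 1} :=
    measurable_fst (measurableSet_singleton (1:ℝ))
  have hpre : ∀ d : Fin 2, (fun ω => (M 0 ω, M 1 ω)) ⁻¹' {p : ℝ × ℝ | p.2 = 1}
      = {ω | M 1 ω = 1} ∧ (fun ω => (M 0 ω, M 1 ω)) ⁻¹' {p : ℝ × ℝ | p.1 = 1}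
      = {ω | M 0 ω = 1} := by intro d; constructor <;> rfl
  have ha : μ {ω | D ω = 1 ∧ D ω * M 1 ω + (1 - D ω) * M 0 ω = 1}
      = μ {ω | D ω = 1} * μ {ω | M 1 ω = 1} := by
    rw [hset1, hindep.measure_inter_preimage_eq_mul _ _ (measurableSet_singleton 1) hmz]
    rfl
  have hb : μ {ω | D ω = 0 ∧ D ω * M 1 ω + (1 - D ω) * M 0 ω = 1}
      = μ {ω | D ω = 0} * μ {ω | M 0 ω = 1} := by
    rw [hset0, hindep.measure_inter_preimage_eq_mul _ _ (measurableSet_singleton 0) hmo]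
    rfl
  set p1 := (μ {ω | D ω = 1}).toReal
  set p0 := (μ {ω | D ω = 0}).toReal
  set q1 := (μ {ω | M 1 ω = 1}).toReal
  set q0 := (μ {ω | M 0 ω = 1}).toReal
  have ha' : (μ {ω | D ω = 1 ∧ D ω * M 1 ω + (1 - D ω) * M 0 ω = 1}).toReal = p1 * q1 := by
    rw [ha, ENNReal.toReal_mul]
  have hb' : (μ {ω | D ω = 0 ∧ D ω * M 1 ω + (1 - D ω) * M 0 ω = 1}).toReal = p0 * q0 := by
    rw [hb, ENNReal.toReal_mul]
  have hq0 : 0 < q0 := by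
    by_contra h
    push_neg at h
    have : q0 = 0 := le_antisymm h ENNReal.toReal_nonneg
    rw [hb', this, mul_zero] at hD0M1
    exact lt_irrefl 0 hD0M1
  have hqmono : q0 ≤ q1 := by rw [hint 0, hint 1] at hmono; exact hmono
  have hbias : (((μ {ω | D ω = 1 ∧ D ω * M 1 ω + (1 - D ω) * M 0 ω = 1}).toReal
            / (μ {ω | D ω * M 1 ω + (1 - D ω) * M 0 ω = 1}).toReal)
          / ((μ {ω | D ω = 0 ∧ D ω * M 1 ω + (1 - D ω) * M 0 ω = 1}).toReal
            / (μ {ω | D ω * M 1 ω + (1 - D ω) * M 0 ω = 1}).toReal))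
        / (p1 / p0) = q1 / q0 := by
    rw [ha', hb']
    field_simp
  have h1 : (1:ℝ) ≤ q1 / q0 := (one_le_div hq0).mpr hqmono
  rw [hbias]
  refine ⟨h1, ?_⟩
  intro naive crr hn hcrr
  rw [hcrr]
  nlinarith
end

section
/- The iterated expectation decomposition ATE = ATE_{M=1}·P(M=1) + E[Y(1)−Y(0) | M=0]·P(M=0) holds, and there exist distributions satisfying mandatory reporting Y(d,0)=0 a.s. in which E[Y(1)−Y(0) | M=0] ≠ 0; hence conditioning on M=0 is not equivalent to intervening to set M=0. -/
open MeasureTheory ProbabilityTheory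

/-- The iterated-expectation decomposition
ATE = ATE_{M=1}·P(M=1) + E[Y(1)−Y(0) | M=0]·P(M=0) holds (with
M = D·M(1)+(1−D)·M(0), Y(d) = (1−M(d))·Y(d,0)+M(d)·Y(d,1), 0 < P(M=1) < 1);
moreover there exists a distribution satisfying mandatory reporting Y(d,0)=0 a.s.
in which E[Y(1)−Y(0) | M=0] ≠ 0, so conditioning on M=0 is not the same as
intervening to set M=0. -/
theorem stmt18 {Ω : Type*} [MeasurableSpace Ω] (μ : Measure Ω) [IsProbabilityMeasure μ]
    (D : Ω → ℝ) (M : Fin 2 → Ω → ℝ) (Y : Fin 2 → Fin 2 → Ω → ℝ)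
    (hDm : Measurable D) (hMm : ∀ d, Measurable (M d)) (hYm : ∀ d m, Measurable (Y d m))
    (hDb : ∀ ω, D ω = 0 ∨ D ω = 1)
    (hMb : ∀ d ω, M d ω = 0 ∨ M d ω = 1)
    (hYb : ∀ d m ω, Y d m ω = 0 ∨ Y d m ω = 1)
    (hpos1 : 0 < (μ {ω | D ω * M 1 ω + (1 - D ω) * M 0 ω = 1}).toReal)
    (hpos0 : 0 < (μ {ω | D ω * M 1 ω + (1 - D ω) * M 0 ω = 0}).toReal) :
    (∫ ω, (((1 - M 1 ω) * Y 1 0 ω + M 1 ω * Y 1 1 ω)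
        - ((1 - M 0 ω) * Y 0 0 ω + M 0 ω * Y 0 1 ω)) ∂μ
      = ((∫ ω in {ω | D ω * M 1 ω + (1 - D ω) * M 0 ω = 1},
            (((1 - M 1 ω) * Y 1 0 ω + M 1 ω * Y 1 1 ω)
              - ((1 - M 0 ω) * Y 0 0 ω + M 0 ω * Y 0 1 ω)) ∂μ)
          / (μ {ω | D ω * M 1 ω + (1 - D ω) * M 0 ω = 1}).toReal)
        * (μ {ω | D ω * M 1 ω + (1 - D ω) * M 0 ω = 1}).toReal
      + ((∫ ω in {ω | D ω * M 1 ω + (1 - D ω) * M 0 ω = 0},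
            (((1 - M 1 ω) * Y 1 0 ω + M 1 ω * Y 1 1 ω)
              - ((1 - M 0 ω) * Y 0 0 ω + M 0 ω * Y 0 1 ω)) ∂μ)
          / (μ {ω | D ω * M 1 ω + (1 - D ω) * M 0 ω = 0}).toReal)
        * (μ {ω | D ω * M 1 ω + (1 - D ω) * M 0 ω = 0}).toReal)
    ∧ ∃ (μ' : Measure (Fin 7 → Fin 2)) (_ : IsProbabilityMeasure μ')
        (D' : (Fin 7 → Fin 2) → ℝ) (M' : Fin 2 → (Fin 7 → Fin 2) → ℝ)
        (Y' : Fin 2 → Fin 2 → (Fin 7 → Fin 2) → ℝ),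
      Measurable D' ∧ (∀ d, Measurable (M' d)) ∧ (∀ d m, Measurable (Y' d m))
      ∧ (∀ ω, D' ω = 0 ∨ D' ω = 1)
      ∧ (∀ d ω, M' d ω = 0 ∨ M' d ω = 1)
      ∧ (∀ d m ω, Y' d m ω = 0 ∨ Y' d m ω = 1)
      ∧ (∀ d : Fin 2, ∀ᵐ ω ∂μ', Y' d 0 ω = 0)
      ∧ 0 < (μ' {ω | D' ω * M' 1 ω + (1 - D' ω) * M' 0 ω = 1}).toReal
      ∧ 0 < (μ' {ω | D' ω * M' 1 ω + (1 - D' ω) * M' 0 ω = 0}).toReal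
      ∧ (∫ ω in {ω | D' ω * M' 1 ω + (1 - D' ω) * M' 0 ω = 0},
            (((1 - M' 1 ω) * Y' 1 0 ω + M' 1 ω * Y' 1 1 ω)
              - ((1 - M' 0 ω) * Y' 0 0 ω + M' 0 ω * Y' 0 1 ω)) ∂μ')
          / (μ' {ω | D' ω * M' 1 ω + (1 - D' ω) * M' 0 ω = 0}).toReal ≠ 0 := by
  classical
  constructor
  · -- Part 1: decomposition
    have hgm : Measurable fun ω => D ω * M 1 ω + (1 - D ω) * M 0 ω := by
      have h1 := hMm 1; have h0 := hMm 0
      fun_prop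
    have hS1 : MeasurableSet {ω | D ω * M 1 ω + (1 - D ω) * M 0 ω = 1} :=
      hgm (measurableSet_singleton 1)
    have hval : ∀ ω, D ω * M 1 ω + (1 - D ω) * M 0 ω = 0 ∨
        D ω * M 1 ω + (1 - D ω) * M 0 ω = 1 := by
      intro ω
      rcases hDb ω with h | h
      · simpa [h] using hMb 0 ω
      · simpa [h] using hMb 1 ω
    have hcompl : {ω | D ω * M 1 ω + (1 - D ω) * M 0 ω = 0}
        = {ω | D ω * M 1 ω + (1 - D ω) * M 0 ω = 1}ᶜ := by
      ext ω
      simp only [Set.mem_setOf_eq, Set.mem_compl_iff]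
      constructor
      · intro h h1; rw [h1] at h; norm_num at h
      · intro h; rcases hval ω with h0 | h1
        · exact h0
        · exact absurd h1 h
    have hint : Integrable (fun ω => (((1 - M 1 ω) * Y 1 0 ω + M 1 ω * Y 1 1 ω)
        - ((1 - M 0 ω) * Y 0 0 ω + M 0 ω * Y 0 1 ω))) μ := by
      apply Integrable.mono' (integrable_const (4 : ℝ))
      · have h1 := hMm 1; have h0 := hMm 0
        have := hYm 0 0; have := hYm 0 1; have := hYm 1 0; have := hYm 1 1
        exact Measurable.aestronglyMeasurable (by fun_prop)
      · refine ae_of_all _ fun ω => ?_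
        rcases hMb 0 ω with h0 | h0 <;> rcases hMb 1 ω with h1 | h1 <;>
          rcases hYb 0 0 ω with a | a <;> rcases hYb 0 1 ω with b | b <;>
          rcases hYb 1 0 ω with c | c <;> rcases hYb 1 1 ω with d | d <;>
          simp [h0, h1, a, b, c, d, Real.norm_eq_abs]
    rw [div_mul_cancel₀ _ (ne_of_gt hpos1), div_mul_cancel₀ _ (ne_of_gt hpos0), hcompl,
      integral_add_compl hS1 hint]
  · -- Part 2: counterexample
    set a : Fin 7 → Fin 2 := fun _ => 0 with ha
    set b : Fin 7 → Fin 2 := fun _ => 1 with hb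
    set μ' : Measure (Fin 7 → Fin 2) :=
      (1/2 : ENNReal) • Measure.dirac a + (1/2 : ENNReal) • Measure.dirac b with hμ'
    have hprob : IsProbabilityMeasure μ' := by
      constructor
      simp [hμ']
      rw [ENNReal.inv_two_add_inv_two]
    set D' : (Fin 7 → Fin 2) → ℝ := fun ω => if ω 0 = 0 then 0 else 1 with hD'
    set M' : Fin 2 → (Fin 7 → Fin 2) → ℝ := fun d _ => (d.val : ℝ) with hM'
    set Y' : Fin 2 → Fin 2 → (Fin 7 → Fin 2) → ℝ :=
      fun d m _ => if d = 1 ∧ m = 1 then 1 else 0 with hY'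
    have hset0 : {ω | D' ω * M' 1 ω + (1 - D' ω) * M' 0 ω = 0} = {ω | ω 0 = 0} := by
      ext ω
      simp only [hD', hM', Set.mem_setOf_eq]
      split_ifs with h <;> simp [h]
    have hset1 : {ω | D' ω * M' 1 ω + (1 - D' ω) * M' 0 ω = 1} = {ω | ¬ ω 0 = 0} := by
      ext ω
      simp only [hD', hM', Set.mem_setOf_eq]
      split_ifs with h <;> simp [h]
    have hm0 : μ' {ω | ω 0 = 0} = 1/2 := by
      rw [hμ', Measure.add_apply, Measure.smul_apply, Measure.smul_apply,
        Measure.dirac_apply, Measure.dirac_apply]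
      simp [ha, hb]
    have hm1 : μ' {ω | ¬ ω 0 = 0} = 1/2 := by
      rw [hμ', Measure.add_apply, Measure.smul_apply, Measure.smul_apply,
        Measure.dirac_apply, Measure.dirac_apply]
      simp [ha, hb]
    have hfun : (fun ω => (((1 - M' 1 ω) * Y' 1 0 ω + M' 1 ω * Y' 1 1 ω)
        - ((1 - M' 0 ω) * Y' 0 0 ω + M' 0 ω * Y' 0 1 ω))) = fun _ => (1 : ℝ) := by
      funext ω
      norm_num [hM', hY']
    refine ⟨μ', hprob, D', M', Y', measurable_of_countable D',
      fun d => measurable_of_countable (M' d),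
      fun d m => measurable_of_countable (Y' d m),
      fun ω => by by_cases h : ω 0 = 0 <;> simp [hD', h],
      fun d ω => by rcases Fin.exists_fin_two.mp ⟨d, rfl⟩ with h | h <;> simp [hM', h],
      fun d m ω => by by_cases h : d = 1 ∧ m = 1 <;> simp [hY', h],
      fun d => ae_of_all _ fun ω => by simp [hY'],
      ?_, ?_, ?_⟩
    · rw [hset1, hm1]; norm_num
    · rw [hset0, hm0]; norm_num
    · rw [hset0, hfun, setIntegral_const, measureReal_def, hm0]
      norm_num
end
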